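/- arXiv:1212.5008 — 3 statements merged into one kernel-verified Lean document; each statement's English description precedes it below -/
import Mathlib

section
/- Let s_1,t_1,s_2,t_2,s_3,t_3 be nonnegative integers with t_1 ≥ 1, t_2 ≥ 1, t_3 ≥ 1, let n = 3 + Σ_{i=1}^3 (2s_i + t_i), let G = G_3(s_1,t_1; s_2,t_2; s_3,t_3), and let G′ = G_3(0,1; 0,1; Σ_{i=1}^3 s_i, Σ_{i=1}^3 t_i − 2) be the graph obtained from G by moving every pendent edge and pendent path of length 2 attached at u_1 and u_2, except one pendent edge at each of u_1 and u_2, to the vertex u_3. Then φ_i(G) ≥ φ_i(G′) for all 0 ≤ i ≤ n; moreover, if G is not isomorphic to G′, then the inequality is strict for every 2 ≤ i ≤ n−2. -/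
open Polynomial SimpleGraph Matrix

open scoped Classical

/-- The signless Laplacian matrix `Q(G) = D(G) + A(G)` of a simple graph, over `ℝ`. -/
noncomputable def sLap {V : Type*} [Fintype V] (G : SimpleGraph V) : Matrix V V ℝ :=
  Matrix.of fun x y =>
    (if x = y then ((G.neighborSet x).ncard : ℝ) else 0) + (if G.Adj x y then 1 else 0)

/-- The signless Laplacian characteristic polynomial `Q_G(x) = det (xI - Q(G))`. -/
noncomputable def QPoly {V : Type*} [Fintype V] [DecidableEq V] (G : SimpleGraph V) :
    Polynomial ℝ :=
  (sLap G).charpoly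

/-- The signless Laplacian coefficients `φ_i(G)`, defined by
`det(xI − Q(G)) = Σ_{i=0}^n (−1)^i φ_i(G) x^{n−i}`. -/
noncomputable def phi {V : Type*} [Fintype V] [DecidableEq V] (G : SimpleGraph V) (i : ℕ) : ℝ :=
  (-1 : ℝ) ^ i * (QPoly G).coeff (Fintype.card V - i)

/-- A unicyclic graph: connected with as many edges as vertices. -/
def IsUnicyclic {V : Type*} [Fintype V] (G : SimpleGraph V) : Prop :=
  G.Connected ∧ G.edgeSet.ncard = Fintype.card V

/-- A vertex lies on (the unique) cycle of `G`. -/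
def OnCycle {V : Type*} (G : SimpleGraph V) (x : V) : Prop :=
  ∃ (y : V) (p : G.Walk y y), p.IsCycle ∧ x ∈ p.support

/-- The (unique) cycle of `G` has odd length. -/
def HasOddCycle {V : Type*} (G : SimpleGraph V) : Prop :=
  ∃ (x : V) (p : G.Walk x x), p.IsCycle ∧ Odd p.length

/-- The (unique) cycle of `G` has even length. -/
def HasEvenCycle {V : Type*} (G : SimpleGraph V) : Prop :=
  ∃ (x : V) (p : G.Walk x x), p.IsCycle ∧ Even p.length

/-- `M` is a matching of `G`: a set of edges of `G`, pairwise sharing no vertex. -/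
def IsMatchingFinset {V : Type*} (G : SimpleGraph V) (M : Finset (Sym2 V)) : Prop :=
  (∀ e ∈ M, e ∈ G.edgeSet) ∧ ∀ e ∈ M, ∀ f ∈ M, e ≠ f → ∀ x : V, x ∈ e → x ∉ f

/-- `G` has matching number `m`. -/
def HasMatchingNumber {V : Type*} (G : SimpleGraph V) (m : ℕ) : Prop :=
  (∃ M : Finset (Sym2 V), IsMatchingFinset G M ∧ M.card = m) ∧
    ∀ M : Finset (Sym2 V), IsMatchingFinset G M → M.card ≤ m

/-- Every tree attached to the cycle of `G` is a pendent path of length at most 2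
attached at a cycle vertex: every vertex off the cycle is either a pendent vertex
attached to a cycle vertex, the middle vertex of a pendent path of length 2 attached
at a cycle vertex, or the end vertex of such a path. -/
def PendantPathsOnly {V : Type*} (G : SimpleGraph V) : Prop :=
  ∀ x : V, ¬ OnCycle G x →
    ((G.neighborSet x).ncard = 1 ∧ ∃ c, G.Adj x c ∧ OnCycle G c) ∨
    ((G.neighborSet x).ncard = 2 ∧
      ∃ c y, G.Adj x c ∧ OnCycle G c ∧ G.Adj x y ∧ (G.neighborSet y).ncard = 1) ∨
    ((G.neighborSet x).ncard = 1 ∧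
      ∃ y c, G.Adj x y ∧ (G.neighborSet y).ncard = 2 ∧ G.Adj y c ∧ OnCycle G c)

/-- Vertex type of the unicyclic graph `G_g(s₁,t₁;…;s_g,t_g)`: the cycle vertices, the
vertices of the pendent paths of length 2, and the pendent vertices. -/
abbrev GgV (g : ℕ) (s t : Fin g → ℕ) : Type :=
  Fin g ⊕ ((Σ i : Fin g, Fin (s i) × Fin 2) ⊕ (Σ i : Fin g, Fin (t i)))

/-- The unicyclic graph `G_g(s₁,t₁;…;s_g,t_g)` obtained from a cycle `u_1 … u_g u_1` by
attaching `s i` pendent paths of length 2 and `t i` pendent edges at the vertex `u i`. -/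
def Gg (g : ℕ) [NeZero g] (s t : Fin g → ℕ) : SimpleGraph (GgV g s t) :=
  SimpleGraph.fromRel fun x y =>
    match x, y with
    | Sum.inl i, Sum.inl j => j = i + 1
    | Sum.inl i, Sum.inr (Sum.inl a) => a.1 = i ∧ a.2.2 = 0
    | Sum.inr (Sum.inl a), Sum.inr (Sum.inl b) => a.2.2 = 0 ∧ b = ⟨a.1, (a.2.1, 1)⟩
    | Sum.inl i, Sum.inr (Sum.inr b) => b.1 = i
    | _, _ => False

section adj
variable (s t : Fin 3 → ℕ)

abbrev Pty := Σ i : Fin 3, Fin (s i) × Fin 2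
abbrev Ety := Σ i : Fin 3, Fin (t i)

lemma adj_inl_inl (i j : Fin 3) :
    (Gg 3 s t).Adj (Sum.inl i) (Sum.inl j) ↔ i ≠ j := by
  simp only [Gg, SimpleGraph.fromRel_adj]
  constructor
  · rintro ⟨h, _⟩ rfl; exact h rfl
  · intro h
    refine ⟨by simpa using h, ?_⟩
    show j = i + 1 ∨ i = j + 1
    fin_cases i <;> fin_cases j <;> simp_all

lemma adj_inl_path (i : Fin 3) (p : Pty s) :
    (Gg 3 s t).Adj (Sum.inl i) (Sum.inr (Sum.inl p)) ↔ p.1 = i ∧ p.2.2 = 0 := by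
  simp only [Gg, SimpleGraph.fromRel_adj]
  constructor
  · rintro ⟨-, h | h⟩
    · exact h
    · exact absurd h not_false
  · intro h; exact ⟨by simp, Or.inl h⟩

lemma adj_inl_pend (i : Fin 3) (e : Ety t) :
    (Gg 3 s t).Adj (Sum.inl i) (Sum.inr (Sum.inr e)) ↔ e.1 = i := by
  simp only [Gg, SimpleGraph.fromRel_adj]
  constructor
  · rintro ⟨-, h | h⟩
    · exact h
    · exact absurd h not_false
  · intro h; exact ⟨by simp, Or.inl h⟩

lemma adj_path_path (p q : Pty s) :
    (Gg 3 s t).Adj (Sum.inr (Sum.inl p)) (Sum.inr (Sum.inl q)) ↔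
      (p.2.2 = 0 ∧ q = ⟨p.1, (p.2.1, 1)⟩) ∨ (q.2.2 = 0 ∧ p = ⟨q.1, (q.2.1, 1)⟩) := by
  simp only [Gg, SimpleGraph.fromRel_adj]
  constructor
  · rintro ⟨-, h⟩; exact h
  · intro h
    refine ⟨?_, h⟩
    simp only [ne_eq, Sum.inr.injEq, Sum.inl.injEq]
    rcases h with ⟨h0, rfl⟩ | ⟨h0, rfl⟩
    · intro hc; rw [hc] at h0; simp at h0
    · intro hc; rw [← hc] at h0; simp at h0

lemma adj_path_pend (p : Pty s) (e : Ety t) :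
    ¬ (Gg 3 s t).Adj (Sum.inr (Sum.inl p)) (Sum.inr (Sum.inr e)) := by
  simp only [Gg, SimpleGraph.fromRel_adj]
  rintro ⟨-, h | h⟩ <;> exact h

lemma adj_pend_pend (e f : Ety t) :
    ¬ (Gg 3 s t).Adj (Sum.inr (Sum.inr e)) (Sum.inr (Sum.inr f)) := by
  simp only [Gg, SimpleGraph.fromRel_adj]
  rintro ⟨-, h | h⟩ <;> exact h

lemma fin3_ne_iff (i j : Fin 3) : i ≠ j ↔ (j = i + 1 ∨ j = i + 2) := by
  fin_cases i <;> fin_cases j <;> decide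

/-- degrees -/
lemma nbhd_pend (e : Ety t) :
    (Gg 3 s t).neighborSet (Sum.inr (Sum.inr e)) = {Sum.inl e.1} := by
  ext y
  simp only [mem_neighborSet, Set.mem_singleton_iff]
  rcases y with j | (p | f)
  · rw [(Gg 3 s t).adj_comm, adj_inl_pend]
    constructor
    · rintro rfl; rfl
    · rintro h; injection h with h; exact h.symm
  · rw [(Gg 3 s t).adj_comm]
    simp [adj_path_pend]
  · simp [adj_pend_pend]

lemma deg_pend (e : Ety t) :
    ((Gg 3 s t).neighborSet (Sum.inr (Sum.inr e))).ncard = 1 := by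
  rw [nbhd_pend]; exact Set.ncard_singleton _

lemma nbhd_path1 (i : Fin 3) (a : Fin (s i)) :
    (Gg 3 s t).neighborSet (Sum.inr (Sum.inl ⟨i, (a, 1)⟩)) =
      {Sum.inr (Sum.inl ⟨i, (a, 0)⟩)} := by
  ext y
  simp only [mem_neighborSet, Set.mem_singleton_iff]
  rcases y with j | (q | f)
  · rw [(Gg 3 s t).adj_comm, adj_inl_path]
    simp
  · rw [adj_path_path]
    constructor
    · rintro (⟨h0, -⟩ | ⟨h0, h1⟩)
      · simp at h0
      · rcases q with ⟨j, b, k⟩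
        obtain ⟨rfl, h2⟩ := Sigma.mk.inj_iff.1 h1
        obtain ⟨rfl, -⟩ := Prod.mk_inj.1 (eq_of_heq h2)
        simp only [Sum.inr.injEq, Sum.inl.injEq, Sigma.mk.inj_iff, heq_eq_eq,
          Prod.mk.injEq, true_and]
        simpa using h0
    · rintro h
      injection h with h; injection h with h
      rcases q with ⟨j, b, k⟩
      obtain ⟨rfl, h2⟩ := Sigma.mk.inj_iff.1 h
      obtain ⟨rfl, rfl⟩ := Prod.mk_inj.1 (eq_of_heq h2)
      exact Or.inr ⟨rfl, rfl⟩
  · simp [adj_path_pend]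

lemma deg_path1 (i : Fin 3) (a : Fin (s i)) :
    ((Gg 3 s t).neighborSet (Sum.inr (Sum.inl ⟨i, (a, 1)⟩))).ncard = 1 := by
  rw [nbhd_path1]; exact Set.ncard_singleton _

lemma nbhd_path0 (i : Fin 3) (a : Fin (s i)) :
    (Gg 3 s t).neighborSet (Sum.inr (Sum.inl ⟨i, (a, 0)⟩)) =
      {Sum.inl i, Sum.inr (Sum.inl ⟨i, (a, 1)⟩)} := by
  ext y
  simp only [mem_neighborSet, Set.mem_insert_iff, Set.mem_singleton_iff]
  rcases y with j | (q | f)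
  · rw [(Gg 3 s t).adj_comm, adj_inl_path]
    simp [eq_comm]
  · rw [adj_path_path]
    simp only [Sum.inl.injEq, reduceCtorEq, false_or, Sum.inr.injEq]
    constructor
    · rintro (⟨-, rfl⟩ | ⟨h0, h1⟩)
      · rfl
      · rcases q with ⟨j, b, k⟩
        obtain ⟨rfl, h2⟩ := Sigma.mk.inj_iff.1 h1
        obtain ⟨-, h3⟩ := Prod.mk_inj.1 (eq_of_heq h2)
        simp at h3
    · rintro h
      exact Or.inl ⟨trivial, h⟩
  · simp [adj_path_pend]

lemma deg_path0 (i : Fin 3) (a : Fin (s i)) :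
    ((Gg 3 s t).neighborSet (Sum.inr (Sum.inl ⟨i, (a, 0)⟩))).ncard = 2 := by
  rw [nbhd_path0]
  exact Set.ncard_pair (by simp)

lemma nbhd_cycle (i : Fin 3) :
    (Gg 3 s t).neighborSet (Sum.inl i) =
      ↑((({Sum.inl (i+1), Sum.inl (i+2)} : Finset (GgV 3 s t)) ∪
        (Finset.univ.image fun a : Fin (s i) => Sum.inr (Sum.inl ⟨i, (a, (0 : Fin 2))⟩))) ∪
        (Finset.univ.image fun b : Fin (t i) => Sum.inr (Sum.inr ⟨i, b⟩))) := by
  ext y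
  simp only [mem_neighborSet, Finset.coe_union, Set.mem_union, Finset.coe_insert,
    Finset.coe_singleton, Set.mem_insert_iff, Set.mem_singleton_iff, Finset.coe_image,
    Finset.coe_univ, Set.image_univ, Set.mem_range]
  rcases y with j | (q | f)
  · rw [adj_inl_inl, fin3_ne_iff]
    constructor
    · rintro (rfl | rfl)
      · exact Or.inl (Or.inl (Or.inl rfl))
      · exact Or.inl (Or.inl (Or.inr rfl))
    · rintro (((h | h) | ⟨a, h⟩) | ⟨a, h⟩) <;> simp_all
  · rw [adj_inl_path]
    rcases q with ⟨j, b, k⟩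
    constructor
    · rintro ⟨rfl, rfl⟩
      exact Or.inl (Or.inr ⟨b, rfl⟩)
    · rintro (((h | h) | ⟨a, h⟩) | ⟨a, h⟩)
      · simp at h
      · simp at h
      · obtain ⟨rfl, h2⟩ := Sigma.mk.inj_iff.1 (Sum.inl.inj (Sum.inr.inj h))
        obtain ⟨-, rfl⟩ := Prod.mk_inj.1 (eq_of_heq h2)
        exact ⟨rfl, rfl⟩
      · simp at h
  · rw [adj_inl_pend]
    rcases f with ⟨j, b⟩
    constructor
    · rintro rfl
      exact Or.inr ⟨b, rfl⟩
    · rintro (((h | h) | ⟨a, h⟩) | ⟨a, h⟩)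
      · simp at h
      · simp at h
      · simp at h
      · obtain ⟨rfl, -⟩ := Sigma.mk.inj_iff.1 (Sum.inr.inj (Sum.inr.inj h))
        rfl

lemma deg_cycle (i : Fin 3) :
    ((Gg 3 s t).neighborSet (Sum.inl i)).ncard = 2 + s i + t i := by
  rw [nbhd_cycle, Set.ncard_coe_finset]
  have hinj1 : Function.Injective (fun a : Fin (s i) => (Sum.inr (Sum.inl ⟨i, (a, (0 : Fin 2))⟩) : GgV 3 s t)) := by
    intro a b h
    obtain ⟨-, h2⟩ := Sigma.mk.inj_iff.1 (Sum.inl.inj (Sum.inr.inj h))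
    exact (Prod.mk_inj.1 (eq_of_heq h2)).1
  have hinj2 : Function.Injective (fun b : Fin (t i) => (Sum.inr (Sum.inr ⟨i, b⟩) : GgV 3 s t)) := by
    intro a b h
    obtain ⟨-, h2⟩ := Sigma.mk.inj_iff.1 (Sum.inr.inj (Sum.inr.inj h))
    exact eq_of_heq h2
  have hne : (Sum.inl (i+1) : GgV 3 s t) ≠ Sum.inl (i+2) := by
    simp only [ne_eq, Sum.inl.injEq]
    fin_cases i <;> decide
  rw [Finset.card_union_of_disjoint, Finset.card_union_of_disjoint]
  · rw [Finset.card_pair hne, Finset.card_image_of_injective _ hinj1,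
      Finset.card_image_of_injective _ hinj2]
    simp only [Finset.card_univ, Fintype.card_fin]
  · rw [Finset.disjoint_left]
    rintro x hx hx2
    simp only [Finset.mem_insert, Finset.mem_singleton] at hx
    simp only [Finset.mem_image] at hx2
    obtain ⟨a, -, rfl⟩ := hx2
    rcases hx with h | h <;> simp at h
  · rw [Finset.disjoint_left]
    rintro x hx hx2
    simp only [Finset.mem_image] at hx2
    obtain ⟨a, -, rfl⟩ := hx2
    simp only [Finset.mem_union, Finset.mem_insert, Finset.mem_singleton,
      Finset.mem_image] at hx
    rcases hx with (h | h) | ⟨b, -, h⟩ <;> simp at h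

end adj
section mat
variable (s t : Fin 3 → ℕ)

lemma sLap_diag {V : Type*} [Fintype V] (G : SimpleGraph V) (x : V) :
    sLap G x x = ((G.neighborSet x).ncard : ℝ) := by
  simp [sLap, SimpleGraph.irrefl]

lemma sLap_off {V : Type*} [Fintype V] (G : SimpleGraph V) {x y : V} (h : x ≠ y) :
    sLap G x y = if G.Adj x y then 1 else 0 := by
  simp [sLap, h]

def pbase {s : Fin 3 → ℕ} (p : Pty s) : Σ i : Fin 3, Fin (s i) := ⟨p.1, p.2.1⟩

lemma adj_path_path' {p q : Pty s} (hpq : p ≠ q) :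
    (Gg 3 s t).Adj (Sum.inr (Sum.inl p)) (Sum.inr (Sum.inl q)) ↔ pbase p = pbase q := by
  rcases p with ⟨i, a, k⟩; rcases q with ⟨j, b, l⟩
  rw [adj_path_path]
  constructor
  · rintro (⟨h0, h1⟩ | ⟨h0, h1⟩)
    · obtain ⟨rfl, h2⟩ := Sigma.mk.inj_iff.1 h1
      obtain ⟨rfl, -⟩ := Prod.mk_inj.1 (eq_of_heq h2)
      rfl
    · obtain ⟨rfl, h2⟩ := Sigma.mk.inj_iff.1 h1
      obtain ⟨rfl, -⟩ := Prod.mk_inj.1 (eq_of_heq h2)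
      rfl
  · intro h
    obtain ⟨rfl, h2⟩ := Sigma.mk.inj_iff.1 h
    obtain rfl := eq_of_heq h2
    rcases (by decide : ∀ k : Fin 2, k = 0 ∨ k = 1) k with rfl | rfl <;>
      rcases (by decide : ∀ k : Fin 2, k = 0 ∨ k = 1) l with rfl | rfl
    · exact absurd rfl hpq
    · exact Or.inl ⟨rfl, rfl⟩
    · exact Or.inr ⟨rfl, rfl⟩
    · exact absurd rfl hpq

noncomputable def MA : Matrix (Fin 3) (Fin 3) ℝ[X] :=
  Matrix.of fun i j => if i = j then X - C ((2 + s i + t i : ℕ) : ℝ) else -1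

noncomputable def MB : Matrix (Fin 3) (Pty s ⊕ Ety t) ℝ[X] :=
  Matrix.of fun i z =>
    Sum.elim (fun p : Pty s => if p.1 = i ∧ p.2.2 = 0 then (-1 : ℝ[X]) else 0)
      (fun e : Ety t => if e.1 = i then (-1 : ℝ[X]) else 0) z

noncomputable def MP : Matrix (Pty s) (Pty s) ℝ[X] :=
  Matrix.of fun p q =>
    if p = q then (if p.2.2 = 0 then X - C 2 else X - C 1)
    else if pbase p = pbase q then -1 else 0

noncomputable def ME : Matrix (Ety t) (Ety t) ℝ[X] :=
  Matrix.of fun e f => if e = f then X - C 1 else 0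

lemma charm_eq :
    charmatrix (sLap (Gg 3 s t)) =
      fromBlocks (MA s t) (MB s t) (MB s t)ᵀ (fromBlocks (MP s) 0 0 (ME t)) := by
  apply Matrix.ext
  intro x y
  rcases x with i | (p | e) <;> rcases y with j | (q | f)
  · -- inl inl
    by_cases hij : i = j
    · subst hij
      rw [charmatrix_apply_eq, sLap_diag, deg_cycle]
      simp [MA]
    · rw [charmatrix_apply_ne _ _ _ (by simpa using hij), sLap_off _ (by simpa using hij)]
      rw [if_pos ((adj_inl_inl s t i j).2 hij)]
      simp [MA, hij]
  · -- inl path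
    rw [charmatrix_apply_ne _ _ _ (by simp), sLap_off _ (by simp)]
    simp only [Matrix.fromBlocks_apply₁₂, MB, Matrix.of_apply, Sum.elim_inl]
    by_cases h : q.1 = i ∧ q.2.2 = 0
    · rw [if_pos ((adj_inl_path s t i q).2 h), if_pos h]; simp
    · rw [if_neg (fun hc => h ((adj_inl_path s t i q).1 hc)), if_neg h]; simp
  · -- inl pend
    rw [charmatrix_apply_ne _ _ _ (by simp), sLap_off _ (by simp)]
    simp only [Matrix.fromBlocks_apply₁₂, MB, Matrix.of_apply, Sum.elim_inr]
    by_cases h : f.1 = i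
    · rw [if_pos ((adj_inl_pend s t i f).2 h), if_pos h]; simp
    · rw [if_neg (fun hc => h ((adj_inl_pend s t i f).1 hc)), if_neg h]; simp
  · -- path inl
    rw [charmatrix_apply_ne _ _ _ (by simp), sLap_off _ (by simp)]
    simp only [Matrix.fromBlocks_apply₂₁, Matrix.transpose_apply, MB, Matrix.of_apply,
      Sum.elim_inl]
    rw [(Gg 3 s t).adj_comm]
    by_cases h : p.1 = j ∧ p.2.2 = 0
    · rw [if_pos ((adj_inl_path s t j p).2 h), if_pos h]; simp
    · rw [if_neg (fun hc => h ((adj_inl_path s t j p).1 hc)), if_neg h]; simp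
  · -- path path
    simp only [Matrix.fromBlocks_apply₂₂, Matrix.fromBlocks_apply₁₁]
    by_cases hpq : p = q
    · subst hpq
      rw [charmatrix_apply_eq]
      rcases p with ⟨i, a, k⟩
      rcases (by decide : ∀ k : Fin 2, k = 0 ∨ k = 1) k with rfl | rfl
      · rw [sLap_diag, deg_path0]
        simp [MP]
      · rw [sLap_diag, deg_path1]
        simp [MP]
    · rw [charmatrix_apply_ne _ _ _ (by simpa using hpq), sLap_off _ (by simpa using hpq)]
      simp only [MP, Matrix.of_apply, if_neg hpq]
      by_cases h : pbase p = pbase q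
      · rw [if_pos ((adj_path_path' s t hpq).2 h), if_pos h]; simp
      · rw [if_neg (fun hc => h ((adj_path_path' s t hpq).1 hc)), if_neg h]; simp
  · -- path pend
    rw [charmatrix_apply_ne _ _ _ (by simp), sLap_off _ (by simp)]
    rw [if_neg (adj_path_pend s t p f)]
    simp
  · -- pend inl
    rw [charmatrix_apply_ne _ _ _ (by simp), sLap_off _ (by simp)]
    simp only [Matrix.fromBlocks_apply₂₁, Matrix.transpose_apply, MB, Matrix.of_apply,
      Sum.elim_inr]
    rw [(Gg 3 s t).adj_comm]
    by_cases h : e.1 = j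
    · rw [if_pos ((adj_inl_pend s t j e).2 h), if_pos h]; simp
    · rw [if_neg (fun hc => h ((adj_inl_pend s t j e).1 hc)), if_neg h]; simp
  · -- pend path
    rw [charmatrix_apply_ne _ _ _ (by simp), sLap_off _ (by simp)]
    rw [(Gg 3 s t).adj_comm, if_neg (adj_path_pend s t q e)]
    simp
  · -- pend pend
    simp only [Matrix.fromBlocks_apply₂₂, Matrix.fromBlocks_apply₂₂]
    by_cases hef : e = f
    · subst hef
      rw [charmatrix_apply_eq, sLap_diag, deg_pend]
      simp [ME]
    · rw [charmatrix_apply_ne _ _ _ (by simpa using hef), sLap_off _ (by simpa using hef)]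
      rw [if_neg (adj_pend_pend s t e f)]
      simp [ME, hef]

end mat
section schur
variable (s t : Fin 3 → ℕ)

noncomputable def Rq : ℝ[X] := X^2 - 3*X + 1
noncomputable def Rw : ℝ[X] := (X - 1) * Rq

lemma C2eq : (C (2:ℝ) : ℝ[X]) = 2 := map_ofNat C 2

lemma C1eq : (C (1:ℝ) : ℝ[X]) = 1 := map_one C

def pEquiv : (Fin 2 × (Σ i : Fin 3, Fin (s i))) ≃ Pty s where
  toFun kp := ⟨kp.2.1, (kp.2.2, kp.1)⟩
  invFun p := (p.2.2, pbase p)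
  left_inv := by rintro ⟨k, i, a⟩; rfl
  right_inv := by rintro ⟨i, a, k⟩; rfl

noncomputable def Mat2 : Matrix (Fin 2) (Fin 2) ℝ[X] := !![X - C 2, -1; -1, X - C 1]

noncomputable def Mat2' : Matrix (Fin 2) (Fin 2) ℝ[X] :=
  !![(X - C 1) * (X - C 1), X - C 1; X - C 1, (X - C 1) * (X - C 2)]

lemma mat2_mul : Mat2 * Mat2' = Rw • 1 := by
  apply Matrix.ext
  intro i j
  fin_cases i <;> fin_cases j <;>
    simp [Mat2, Mat2', Matrix.mul_apply, Fin.sum_univ_two, Rw, Rq, Matrix.one_apply,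
      C2eq, C1eq] <;> ring

lemma mat2_det : Mat2.det = Rq := by
  rw [Mat2, Matrix.det_fin_two_of, C2eq, C1eq, Rq]
  ring

lemma reindex_bd_apply (M : Matrix (Fin 2) (Fin 2) ℝ[X]) (p q : Pty s) :
    (Matrix.reindex (pEquiv s) (pEquiv s))
      (Matrix.blockDiagonal fun _ : Σ i : Fin 3, Fin (s i) => M) p q =
    if pbase p = pbase q then M p.2.2 q.2.2 else 0 := by
  rcases p with ⟨i, a, k⟩; rcases q with ⟨j, b, l⟩
  simp only [Matrix.reindex_apply, Matrix.submatrix_apply, Matrix.blockDiagonal_apply,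
    pEquiv, Equiv.coe_fn_symm_mk, pbase]
  exact if_congr Iff.rfl rfl rfl

noncomputable def MP' : Matrix (Pty s) (Pty s) ℝ[X] :=
  (Matrix.reindex (pEquiv s) (pEquiv s))
    (Matrix.blockDiagonal fun _ : Σ i : Fin 3, Fin (s i) => Mat2')

lemma MP'_apply (p q : Pty s) :
    MP' s p q = if pbase p = pbase q then Mat2' p.2.2 q.2.2 else 0 :=
  reindex_bd_apply s Mat2' p q

lemma pty_eq_iff (p q : Pty s) : p = q ↔ (pbase p = pbase q ∧ p.2.2 = q.2.2) := by
  rcases p with ⟨i, a, k⟩; rcases q with ⟨j, b, l⟩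
  constructor
  · intro h
    obtain ⟨rfl, h2⟩ := Sigma.mk.inj_iff.1 h
    obtain ⟨rfl, rfl⟩ := Prod.mk_inj.1 (eq_of_heq h2)
    exact ⟨rfl, rfl⟩
  · rintro ⟨h1, h2⟩
    obtain ⟨rfl, h3⟩ := Sigma.mk.inj_iff.1 h1
    obtain rfl := eq_of_heq h3
    simp only at h2
    subst h2
    rfl

lemma MP_eq : MP s = (Matrix.reindex (pEquiv s) (pEquiv s))
    (Matrix.blockDiagonal fun _ : Σ i : Fin 3, Fin (s i) => Mat2) := by
  apply Matrix.ext
  intro p q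
  rw [reindex_bd_apply]
  by_cases h : pbase p = pbase q
  · rw [if_pos h]
    by_cases hpq : p = q
    · subst hpq
      rw [MP, Matrix.of_apply, if_pos rfl]
      rcases (by decide : ∀ k : Fin 2, k = 0 ∨ k = 1) p.2.2 with hk | hk <;>
        rw [hk] <;> simp [Mat2]
    · rw [MP, Matrix.of_apply, if_neg hpq, if_pos h]
      have hkl : p.2.2 ≠ q.2.2 := fun hc => hpq ((pty_eq_iff s p q).2 ⟨h, hc⟩)
      rcases (by decide : ∀ k : Fin 2, k = 0 ∨ k = 1) p.2.2 with hk | hk <;>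
        rcases (by decide : ∀ k : Fin 2, k = 0 ∨ k = 1) q.2.2 with hl | hl <;>
          rw [hk, hl] <;> rw [hk, hl] at hkl <;>
            first | (exact absurd rfl hkl) | simp [Mat2]
  · rw [if_neg h, MP, Matrix.of_apply, if_neg (fun hc => h (((pty_eq_iff s p q).1 hc).1)),
      if_neg h]

lemma MP_mul_MP' : MP s * MP' s = Rw • 1 := by
  rw [MP_eq, MP']
  simp only [Matrix.reindex_apply]
  rw [Matrix.submatrix_mul_equiv, ← Matrix.blockDiagonal_mul]
  simp only [mat2_mul]
  apply Matrix.ext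
  intro p q
  have h := reindex_bd_apply s (Rw • 1) p q
  simp only [Matrix.reindex_apply] at h
  rw [h]
  by_cases h1 : pbase p = pbase q
  · by_cases h2 : p.2.2 = q.2.2
    · have h3 : p = q := (pty_eq_iff s p q).2 ⟨h1, h2⟩
      simp [h1, h2, h3, Matrix.smul_apply, Matrix.one_apply]
    · have h3 : p ≠ q := fun hc => h2 ((pty_eq_iff s p q).1 hc).2
      simp [h1, h2, h3, Matrix.smul_apply, Matrix.one_apply]
  · have h3 : p ≠ q := fun hc => h1 ((pty_eq_iff s p q).1 hc).1
    simp [h1, h3, Matrix.smul_apply, Matrix.one_apply]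

lemma ME_eq : ME t = ((X : ℝ[X]) - C 1) • (1 : Matrix (Ety t) (Ety t) ℝ[X]) := by
  apply Matrix.ext
  intro e f
  by_cases h : e = f <;>
    simp [ME, Matrix.smul_apply, Matrix.one_apply, h]

noncomputable def MD : Matrix (Pty s ⊕ Ety t) (Pty s ⊕ Ety t) ℝ[X] :=
  fromBlocks (MP s) 0 0 (ME t)

noncomputable def MD' : Matrix (Pty s ⊕ Ety t) (Pty s ⊕ Ety t) ℝ[X] :=
  fromBlocks (MP' s) 0 0 (Rq • 1)

lemma MD_mul_MD' : MD s t * MD' s t = Rw • 1 := by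
  rw [MD, MD', Matrix.fromBlocks_multiply]
  have h2 : ME t * ((Rq : ℝ[X]) • (1 : Matrix (Ety t) (Ety t) ℝ[X])) = Rw • 1 := by
    rw [ME_eq, Matrix.smul_mul, Matrix.mul_smul, Matrix.one_mul, smul_smul, C1eq, Rw]
  rw [MP_mul_MP', h2]
  simp only [Matrix.mul_zero, Matrix.zero_mul, add_zero, zero_add]
  rw [show (0 : Matrix (Pty s) (Ety t) ℝ[X]) = Rw • 0 from (smul_zero _).symm,
    show (0 : Matrix (Ety t) (Pty s) ℝ[X]) = Rw • 0 from (smul_zero _).symm,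
    ← Matrix.fromBlocks_smul, Matrix.fromBlocks_one]

end schur
section schur2
variable (s t : Fin 3 → ℕ)

lemma filter_P_card (i : Fin 3) :
    (Finset.univ.filter (fun p : Pty s => p.1 = i ∧ p.2.2 = 0)).card = s i := by
  have hinj : Function.Injective (fun a : Fin (s i) => (⟨i, (a, 0)⟩ : Pty s)) := by
    intro a b h
    obtain ⟨-, h2⟩ := Sigma.mk.inj_iff.1 h
    exact (Prod.mk_inj.1 (eq_of_heq h2)).1
  have himg : Finset.univ.filter (fun p : Pty s => p.1 = i ∧ p.2.2 = 0) =
      Finset.univ.image (fun a : Fin (s i) => (⟨i, (a, 0)⟩ : Pty s)) := by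
    ext p
    simp only [Finset.mem_filter, Finset.mem_univ, true_and, Finset.mem_image]
    rcases p with ⟨j, b, k⟩
    constructor
    · rintro ⟨rfl, rfl⟩
      exact ⟨b, rfl⟩
    · rintro ⟨a, h⟩
      obtain ⟨rfl, h2⟩ := Sigma.mk.inj_iff.1 h
      obtain ⟨rfl, rfl⟩ := Prod.mk_inj.1 (eq_of_heq h2)
      exact ⟨rfl, rfl⟩
  rw [himg, Finset.card_image_of_injective _ hinj, Finset.card_univ, Fintype.card_fin]

lemma filter_E_card (i : Fin 3) :
    (Finset.univ.filter (fun e : Ety t => e.1 = i)).card = t i := by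
  have hinj : Function.Injective (fun b : Fin (t i) => (⟨i, b⟩ : Ety t)) := by
    intro a b h
    obtain ⟨-, h2⟩ := Sigma.mk.inj_iff.1 h
    exact eq_of_heq h2
  have himg : Finset.univ.filter (fun e : Ety t => e.1 = i) =
      Finset.univ.image (fun b : Fin (t i) => (⟨i, b⟩ : Ety t)) := by
    ext e
    simp only [Finset.mem_filter, Finset.mem_univ, true_and, Finset.mem_image]
    rcases e with ⟨j, b⟩
    constructor
    · rintro rfl
      exact ⟨b, rfl⟩
    · rintro ⟨a, h⟩
      obtain ⟨rfl, -⟩ := Sigma.mk.inj_iff.1 h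
      rfl
  rw [himg, Finset.card_image_of_injective _ hinj, Finset.card_univ, Fintype.card_fin]

lemma sum_P (i : Fin 3) (c : ℝ[X]) :
    (∑ p : Pty s, if p.1 = i ∧ p.2.2 = 0 then c else 0) = (s i : ℝ[X]) * c := by
  rw [← Finset.sum_filter, Finset.sum_const, filter_P_card, nsmul_eq_mul]

lemma sum_E (i : Fin 3) (c : ℝ[X]) :
    (∑ e : Ety t, if e.1 = i then c else 0) = (t i : ℝ[X]) * c := by
  rw [← Finset.sum_filter, Finset.sum_const, filter_E_card, nsmul_eq_mul]

noncomputable def MZ : Matrix (Fin 3) (Pty s ⊕ Ety t) ℝ[X] :=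
  Matrix.of fun i z =>
    Sum.elim (fun q : Pty s => if q.1 = i then -(Mat2' 0 q.2.2) else 0)
      (fun f : Ety t => if f.1 = i then -Rq else 0) z

lemma pbase_fst {p q : Pty s} (h : pbase p = pbase q) : p.1 = q.1 := by
  rcases p with ⟨i, a, k⟩; rcases q with ⟨j, b, l⟩
  exact (Sigma.mk.inj_iff.1 h).1

lemma MB_mul_MD' : MB s t * MD' s t = MZ s t := by
  apply Matrix.ext
  intro i z
  rcases z with q | f
  · rw [Matrix.mul_apply, Fintype.sum_sum_type]
    have hE : (∑ e : Ety t, MB s t i (Sum.inr e) * MD' s t (Sum.inr e) (Sum.inl q)) = 0 := by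
      apply Finset.sum_eq_zero; intro e _
      simp [MD']
    rw [hE, add_zero]
    by_cases hq : q.1 = i
    · rw [Finset.sum_eq_single (⟨q.1, (q.2.1, 0)⟩ : Pty s)]
      · have e1 : MB s t i (Sum.inl (⟨q.1, (q.2.1, 0)⟩ : Pty s)) = -1 := by
          simp [MB, hq]
        have e2 : MD' s t (Sum.inl (⟨q.1, (q.2.1, 0)⟩ : Pty s)) (Sum.inl q) =
            Mat2' 0 q.2.2 := by
          simp only [MD', Matrix.fromBlocks_apply₁₁, MP'_apply]
          rw [if_pos (show pbase (⟨q.1, (q.2.1, 0)⟩ : Pty s) = pbase q from rfl)]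
        rw [e1, e2]
        simp only [MZ, Matrix.of_apply, Sum.elim_inl, if_pos hq]
        ring
      · intro p _ hne
        simp only [MB, Matrix.of_apply, Sum.elim_inl, MD', Matrix.fromBlocks_apply₁₁,
          MP'_apply]
        by_cases hc1 : p.1 = i ∧ p.2.2 = 0
        · by_cases hc2 : pbase p = pbase q
          · exfalso
            apply hne
            apply (pty_eq_iff s p _).2
            constructor
            · rw [hc2]; rfl
            · exact hc1.2
          · rw [if_neg hc2, mul_zero]
        · rw [if_neg hc1, zero_mul]
      · intro h
        exact absurd (Finset.mem_univ _) h
    · rw [Finset.sum_eq_zero, MZ]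
      · simp [hq]
      · intro p _
        simp only [MB, Matrix.of_apply, Sum.elim_inl, MD', Matrix.fromBlocks_apply₁₁,
          MP'_apply]
        by_cases hc1 : p.1 = i ∧ p.2.2 = 0
        · by_cases hc2 : pbase p = pbase q
          · exact absurd ((pbase_fst s hc2).symm.trans hc1.1) hq
          · rw [if_neg hc2, mul_zero]
        · rw [if_neg hc1, zero_mul]
  · rw [Matrix.mul_apply, Fintype.sum_sum_type]
    have hP : (∑ p : Pty s, MB s t i (Sum.inl p) * MD' s t (Sum.inl p) (Sum.inr f)) = 0 := by
      apply Finset.sum_eq_zero; intro p _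
      simp [MD']
    rw [hP, zero_add]
    rw [Finset.sum_eq_single f]
    · simp only [MB, Matrix.of_apply, Sum.elim_inr, MD', Matrix.fromBlocks_apply₂₂,
        Matrix.smul_apply, Matrix.one_apply_eq, MZ]
      by_cases hf : f.1 = i <;> simp [hf, smul_eq_mul]
    · intro e _ hne
      simp only [MD', Matrix.fromBlocks_apply₂₂, Matrix.smul_apply, Matrix.one_apply,
        if_neg hne, smul_zero, mul_zero]
    · intro h
      exact absurd (Finset.mem_univ _) h

noncomputable def MS : Matrix (Fin 3) (Fin 3) ℝ[X] :=
  Matrix.of fun i j => if i = j then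
    (s i : ℝ[X]) * ((X - C 1) * (X - C 1)) + (t i : ℝ[X]) * Rq else 0

lemma MZ_mul_MBt : MZ s t * (MB s t)ᵀ = MS s t := by
  apply Matrix.ext
  intro i j
  rw [Matrix.mul_apply, Fintype.sum_sum_type]
  rcases em (i = j) with rfl | hij
  · have hPs : (∑ p : Pty s, MZ s t i (Sum.inl p) * (MB s t)ᵀ (Sum.inl p) i) =
        (s i : ℝ[X]) * ((X - C 1) * (X - C 1)) := by
      rw [show ((s i : ℝ[X]) * ((X - C 1) * (X - C 1))) =
          (s i : ℝ[X]) * (Mat2' 0 0) by rw [Mat2']; norm_num]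
      rw [← sum_P s i (Mat2' 0 0)]
      apply Finset.sum_congr rfl
      intro p _
      simp only [MZ, Matrix.of_apply, Sum.elim_inl, Matrix.transpose_apply, MB]
      by_cases hc1 : p.1 = i ∧ p.2.2 = 0
      · rw [if_pos hc1, if_pos hc1.1, if_pos hc1, hc1.2]
        ring
      · rw [if_neg hc1]
        by_cases hc2 : p.1 = i
        · have : ¬ p.2.2 = 0 := fun hc => hc1 ⟨hc2, hc⟩
          simp [hc2, this]
        · simp [hc2]
    have hEs : (∑ e : Ety t, MZ s t i (Sum.inr e) * (MB s t)ᵀ (Sum.inr e) i) =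
        (t i : ℝ[X]) * Rq := by
      rw [← sum_E t i Rq]
      apply Finset.sum_congr rfl
      intro e _
      simp only [MZ, Matrix.of_apply, Sum.elim_inr, Matrix.transpose_apply, MB]
      by_cases hc : e.1 = i
      · rw [if_pos hc, if_pos hc, if_pos hc]
        ring
      · simp [hc]
    rw [hPs, hEs]
    simp [MS]
  · have hPs : (∑ p : Pty s, MZ s t i (Sum.inl p) * (MB s t)ᵀ (Sum.inl p) j) = 0 := by
      apply Finset.sum_eq_zero
      intro p _
      simp only [MZ, Matrix.of_apply, Sum.elim_inl, Matrix.transpose_apply, MB]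
      by_cases hc1 : p.1 = i
      · have : ¬ (p.1 = j ∧ p.2.2 = 0) := fun hc => hij (hc1.symm.trans hc.1)
        simp [this]
      · simp [hc1]
    have hEs : (∑ e : Ety t, MZ s t i (Sum.inr e) * (MB s t)ᵀ (Sum.inr e) j) = 0 := by
      apply Finset.sum_eq_zero
      intro e _
      simp only [MZ, Matrix.of_apply, Sum.elim_inr, Matrix.transpose_apply, MB]
      by_cases hc : e.1 = i
      · have : ¬ e.1 = j := fun hc2 => hij (hc.symm.trans hc2)
        simp [hc, this, hij]
      · simp [hc]
    rw [hPs, hEs, add_zero, MS]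
    simp [hij]

noncomputable def APoly (i : Fin 3) : ℝ[X] :=
  (X - ((2 + s i + t i : ℕ) : ℝ[X])) * Rw - ((t i : ℕ) : ℝ[X]) * Rq
    - ((s i : ℕ) : ℝ[X]) * (X - 1)^2

noncomputable def MSC : Matrix (Fin 3) (Fin 3) ℝ[X] :=
  Matrix.of fun i j => if i = j then APoly s t i else -Rw

lemma SC_eq : Rw • MA s t - MB s t * (MD' s t * (MB s t)ᵀ) = MSC s t := by
  rw [← Matrix.mul_assoc, MB_mul_MD', MZ_mul_MBt]
  apply Matrix.ext
  intro i j
  rcases em (i = j) with rfl | hij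
  · simp only [Matrix.sub_apply, Matrix.smul_apply, MA, MS, MSC, Matrix.of_apply,
      if_pos rfl]
    rw [APoly, map_natCast C, C1eq, smul_eq_mul]
    push_cast
    ring
  · simp only [Matrix.sub_apply, Matrix.smul_apply, MA, MS, MSC, Matrix.of_apply,
      if_neg hij]
    rw [smul_eq_mul]
    ring

noncomputable def MU : Matrix (GgV 3 s t) (GgV 3 s t) ℝ[X] :=
  fromBlocks (Rw • 1) 0 (-(MD' s t * (MB s t)ᵀ)) 1

lemma NU : charmatrix (sLap (Gg 3 s t)) * MU s t =
    fromBlocks (MSC s t) (MB s t) 0 (MD s t) := by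
  rw [charm_eq, MU, Matrix.fromBlocks_multiply, Matrix.fromBlocks_inj]
  have hMD : fromBlocks (MP s) 0 0 (ME t) = MD s t := rfl
  refine ⟨?_, ?_, ?_, ?_⟩
  · rw [Matrix.mul_smul, Matrix.mul_one, Matrix.mul_neg, ← sub_eq_add_neg, SC_eq]
  · simp
  · rw [hMD, Matrix.mul_neg, ← Matrix.mul_assoc, MD_mul_MD', Matrix.mul_smul,
      Matrix.mul_one, Matrix.smul_mul, Matrix.one_mul, ← sub_eq_add_neg, sub_self]
  · rw [hMD]
    simp

lemma det_MP : (MP s).det = Rq ^ (s 0 + s 1 + s 2) := by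
  rw [MP_eq, Matrix.det_reindex_self, Matrix.det_blockDiagonal]
  simp only [mat2_det, Finset.prod_const, Finset.card_univ]
  congr 1
  simp [Fin.sum_univ_three]

lemma det_ME : (ME t).det = (X - C 1) ^ (t 0 + t 1 + t 2) := by
  rw [ME_eq, Matrix.det_smul, Matrix.det_one, mul_one]
  congr 1
  simp [Fin.sum_univ_three]

lemma det_MD : (MD s t).det = Rq ^ (s 0 + s 1 + s 2) * (X - C 1) ^ (t 0 + t 1 + t 2) := by
  rw [MD, Matrix.det_fromBlocks_zero₂₁, det_MP, det_ME]

lemma det_MSC : (MSC s t).det =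
    APoly s t 0 * APoly s t 1 * APoly s t 2
      - (APoly s t 0 + APoly s t 1 + APoly s t 2) * Rw^2 - 2*Rw^3 := by
  rw [Matrix.det_fin_three]
  norm_num [MSC, Matrix.of_apply, Fin.ext_iff]
  ring

lemma main_id :
    (sLap (Gg 3 s t)).charpoly * Rw^3 =
      (X - C 1)^(t 0 + t 1 + t 2) * Rq^(s 0 + s 1 + s 2) *
        (APoly s t 0 * APoly s t 1 * APoly s t 2
          - (APoly s t 0 + APoly s t 1 + APoly s t 2) * Rw^2 - 2*Rw^3) := by
  have hdet := congrArg Matrix.det (NU s t)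
  rw [Matrix.det_mul] at hdet
  have hU : (MU s t).det = Rw^3 := by
    rw [MU, Matrix.det_fromBlocks_zero₁₂, Matrix.det_one, mul_one, Matrix.det_smul,
      Matrix.det_one, mul_one]
    norm_num
  have hRHS : (fromBlocks (MSC s t) (MB s t) 0 (MD s t)).det =
      (MSC s t).det * (MD s t).det := Matrix.det_fromBlocks_zero₂₁ _ _ _
  rw [hU, hRHS, det_MSC, det_MD] at hdet
  show (charmatrix (sLap (Gg 3 s t))).det * Rw^3 = _
  rw [hdet]
  ring

end schur2
section altnn

/-- Sign-alternating nonnegativity of coefficients. -/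
def AltNN (a : ℕ) (p : ℝ[X]) : Prop := ∀ d : ℕ, 0 ≤ (-1 : ℝ)^(a+d) * p.coeff d

/-- AltNN plus strict positivity on the coefficient range `[lo, hi]`. -/
def PosOn (p : ℝ[X]) (a lo hi : ℕ) : Prop :=
  AltNN a p ∧ lo ≤ hi ∧ ∀ d : ℕ, lo ≤ d → d ≤ hi → 0 < (-1 : ℝ)^(a+d) * p.coeff d

lemma neg_one_pow_congr' {a b : ℕ} (h : a % 2 = b % 2) : ((-1 : ℝ))^a = (-1)^b := by
  rw [← Nat.div_add_mod a 2, ← Nat.div_add_mod b 2, h]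
  rw [pow_add, pow_add, pow_mul, pow_mul]
  norm_num

lemma altnn_congr {a b : ℕ} {p : ℝ[X]} (h : a % 2 = b % 2) (hp : AltNN a p) : AltNN b p := by
  intro d
  rw [← neg_one_pow_congr' (show (a+d) % 2 = (b+d) % 2 by omega)]
  exact hp d

lemma altnn_zero (a : ℕ) : AltNN a 0 := by
  intro d; simp

lemma altnn_add {a : ℕ} {p q : ℝ[X]} (hp : AltNN a p) (hq : AltNN a q) :
    AltNN a (p + q) := by
  intro d
  rw [Polynomial.coeff_add, mul_add]
  exact add_nonneg (hp d) (hq d)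

lemma altnn_neg {a : ℕ} {p : ℝ[X]} (hp : AltNN a p) : AltNN (a+1) (-p) := by
  intro d
  calc (0:ℝ) ≤ (-1)^(a+d) * p.coeff d := hp d
    _ = (-1)^(a+1+d) * (-p).coeff d := by
        rw [Polynomial.coeff_neg, show a+1+d = (a+d)+1 by omega, pow_succ]
        ring

lemma altnn_mul {a b : ℕ} {p q : ℝ[X]} (hp : AltNN a p) (hq : AltNN b q) :
    AltNN (a + b) (p * q) := by
  intro d
  rw [Polynomial.coeff_mul, Finset.mul_sum]
  apply Finset.sum_nonneg
  intro x hx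
  have hd := Finset.HasAntidiagonal.mem_antidiagonal.1 hx
  have : (-1:ℝ)^(a+b+d) * (p.coeff x.1 * q.coeff x.2) =
      ((-1)^(a+x.1) * p.coeff x.1) * ((-1)^(b+x.2) * q.coeff x.2) := by
    rw [show a+b+d = (a+x.1)+(b+x.2) by omega, pow_add]
    ring
  rw [this]
  exact mul_nonneg (hp x.1) (hq x.2)

lemma poson_altnn {p : ℝ[X]} {a lo hi : ℕ} (h : PosOn p a lo hi) : AltNN a p := h.1

lemma poson_mul {p q : ℝ[X]} {a b l1 h1 l2 h2 : ℕ}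
    (hp : PosOn p a l1 h1) (hq : PosOn q b l2 h2) :
    PosOn (p * q) (a + b) (l1 + l2) (h1 + h2) := by
  obtain ⟨hp1, hple, hp2⟩ := hp
  obtain ⟨hq1, hqle, hq2⟩ := hq
  refine ⟨altnn_mul hp1 hq1, by omega, ?_⟩
  intro d hd1 hd2
  have hi : ∃ i j, i + j = d ∧ l1 ≤ i ∧ i ≤ h1 ∧ l2 ≤ j ∧ j ≤ h2 := by
    refine ⟨max l1 (d - h2), d - max l1 (d - h2), by omega, by omega, by omega, by omega, by omega⟩
  obtain ⟨i, j, hij, hi1, hi2, hj1, hj2⟩ := hi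
  rw [Polynomial.coeff_mul, Finset.mul_sum]
  have hterm : ∀ x ∈ Finset.HasAntidiagonal.antidiagonal d,
      (0:ℝ) ≤ (-1)^(a+b+d) * (p.coeff x.1 * q.coeff x.2) := by
    intro x hx
    have hd := Finset.HasAntidiagonal.mem_antidiagonal.1 hx
    have : (-1:ℝ)^(a+b+d) * (p.coeff x.1 * q.coeff x.2) =
        ((-1)^(a+x.1) * p.coeff x.1) * ((-1)^(b+x.2) * q.coeff x.2) := by
      rw [show a+b+d = (a+x.1)+(b+x.2) by omega, pow_add]
      ring
    rw [this]
    exact mul_nonneg (hp1 x.1) (hq1 x.2)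
  apply Finset.sum_pos' hterm
  refine ⟨(i, j), Finset.HasAntidiagonal.mem_antidiagonal.2 hij, ?_⟩
  have : (-1:ℝ)^(a+b+d) * (p.coeff i * q.coeff j) =
      ((-1)^(a+i) * p.coeff i) * ((-1)^(b+j) * q.coeff j) := by
    rw [show a+b+d = (a+i)+(b+j) by omega, pow_add]
    ring
  rw [this]
  exact mul_pos (hp2 i hi1 hi2) (hq2 j hj1 hj2)

lemma poson_congr {p : ℝ[X]} {a b lo hi : ℕ} (h : a % 2 = b % 2) (hp : PosOn p a lo hi) :
    PosOn p b lo hi := by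
  obtain ⟨h1, h2, h3⟩ := hp
  refine ⟨altnn_congr h h1, h2, ?_⟩
  intro d hd1 hd2
  rw [← neg_one_pow_congr' (show (a+d) % 2 = (b+d) % 2 by omega)]
  exact h3 d hd1 hd2

lemma poson_one : PosOn (1 : ℝ[X]) 0 0 0 := by
  refine ⟨?_, le_refl 0, ?_⟩
  · intro d
    rcases d with _ | d <;> simp [Polynomial.coeff_one]
  · intro d h1 h2
    obtain rfl : d = 0 := le_antisymm h2 h1
    simp

lemma poson_pow {p : ℝ[X]} {a lo hi : ℕ} (hp : PosOn p a lo hi) (n : ℕ) :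
    PosOn (p^n) (n*a) (n*lo) (n*hi) := by
  induction n with
  | zero => simpa using poson_one
  | succ n ih =>
      have h2 := poson_mul ih hp
      rw [pow_succ]
      have e1 : n*a + a = (n+1)*a := by ring
      have e2 : n*lo + lo = (n+1)*lo := by ring
      have e3 : n*hi + hi = (n+1)*hi := by ring
      rw [e1, e2, e3] at h2
      exact h2

lemma poson_add_altnn {p q : ℝ[X]} {a lo hi : ℕ} (hp : PosOn p a lo hi) (hq : AltNN a q) :
    PosOn (p + q) a lo hi := by
  obtain ⟨h1, h2, h3⟩ := hp
  refine ⟨altnn_add h1 hq, h2, ?_⟩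
  intro d hd1 hd2
  rw [Polynomial.coeff_add, mul_add]
  exact add_pos_of_pos_of_nonneg (h3 d hd1 hd2) (hq d)

lemma altnn_natmul {a : ℕ} {p : ℝ[X]} (c : ℕ) (hp : AltNN a p) :
    AltNN a ((c : ℝ[X]) * p) := by
  intro d
  rw [show ((c : ℝ[X]) : ℝ[X]) = Polynomial.C (c : ℝ) from (map_natCast Polynomial.C c).symm,
    Polynomial.coeff_C_mul]
  calc (0:ℝ) ≤ (c : ℝ) * ((-1)^(a+d) * p.coeff d) :=
        mul_nonneg (by positivity) (hp d)
    _ = (-1)^(a+d) * ((c:ℝ) * p.coeff d) := by ring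

lemma poson_natmul {a lo hi : ℕ} {p : ℝ[X]} {c : ℕ} (hc : 0 < c) (hp : PosOn p a lo hi) :
    PosOn ((c : ℝ[X]) * p) a lo hi := by
  obtain ⟨h1, h2, h3⟩ := hp
  refine ⟨altnn_natmul c h1, h2, ?_⟩
  intro d hd1 hd2
  rw [show ((c : ℝ[X]) : ℝ[X]) = Polynomial.C (c : ℝ) from (map_natCast Polynomial.C c).symm,
    Polynomial.coeff_C_mul]
  calc (0:ℝ) < (c : ℝ) * ((-1)^(a+d) * p.coeff d) := by
        apply mul_pos _ (h3 d hd1 hd2)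
        exact_mod_cast hc
    _ = (-1)^(a+d) * ((c:ℝ) * p.coeff d) := by ring

lemma poson_X : PosOn (X : ℝ[X]) 1 1 1 := by
  refine ⟨?_, le_refl 1, ?_⟩
  · intro d
    rcases d with _ | _ | d <;> simp [Polynomial.coeff_X]
  · intro d h1 h2
    obtain rfl : d = 1 := le_antisymm h2 h1
    simp

lemma poson_Xsub1 : PosOn ((X : ℝ[X]) - 1) 1 0 1 := by
  refine ⟨?_, by omega, ?_⟩
  · intro d
    rcases d with _ | _ | d <;> simp [Polynomial.coeff_X, Polynomial.coeff_one, pow_succ]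
  · intro d h1 h2
    interval_cases d <;> simp [Polynomial.coeff_X, Polynomial.coeff_one, pow_succ] <;> norm_num

lemma poson_Xsub2 : PosOn ((X : ℝ[X]) - 2) 1 0 1 := by
  have h2 : ((X : ℝ[X]) - 2) = X - C 2 := by rw [C2eq]
  refine ⟨?_, by omega, ?_⟩
  · intro d
    rcases d with _ | _ | d <;>
      simp [h2, Polynomial.coeff_X, Polynomial.coeff_C, pow_succ]
  · intro d h1 h2'
    interval_cases d <;>
      simp [h2, Polynomial.coeff_X, Polynomial.coeff_C, pow_succ] <;> norm_num

lemma poson_Rq : PosOn Rq 2 0 2 := by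
  have hRq : Rq = X^2 - C 3 * X + 1 := by
    rw [Rq, show (C (3:ℝ) : ℝ[X]) = 3 from map_ofNat C 3]
  have hc0 : Rq.coeff 0 = 1 := by
    simp [hRq, Polynomial.coeff_X, Polynomial.coeff_one, Polynomial.coeff_X_pow,
      Polynomial.coeff_C_mul]
  have hc1 : Rq.coeff 1 = -3 := by
    simp [hRq, Polynomial.coeff_X, Polynomial.coeff_one, Polynomial.coeff_X_pow,
      Polynomial.coeff_C_mul]
  have hc2 : Rq.coeff 2 = 1 := by
    simp [hRq, Polynomial.coeff_X, Polynomial.coeff_one, Polynomial.coeff_X_pow,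
      Polynomial.coeff_C_mul]
  have hc3 : ∀ d : ℕ, Rq.coeff (d+3) = 0 := by
    intro d
    simp [hRq, Polynomial.coeff_X, Polynomial.coeff_one, Polynomial.coeff_X_pow,
      Polynomial.coeff_C_mul, show ¬(2 = d+3) by omega, show ¬(d+3 = 1) by omega,
      show ¬(d+3 = 0) by omega]
  refine ⟨?_, by omega, ?_⟩
  · intro d
    rcases d with _ | _ | _ | d
    · rw [hc0]; norm_num
    · rw [hc1]; norm_num [pow_succ]
    · rw [hc2]; norm_num [pow_succ]
    · rw [hc3]; norm_num
  · intro d h1 h2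
    interval_cases d
    · rw [hc0]; norm_num
    · rw [hc1]; norm_num [pow_succ]
    · rw [hc2]; norm_num [pow_succ]

end altnn
section decomp
variable (s1 s2 s3 a1 a2 a3 : ℕ)

def cα : ℕ := a1*a2 + a1*a3 + a2*a3
def cβ : ℕ := s1*(a2+a3) + s2*(a1+a3) + s3*(a1+a2)
def cγ : ℕ := s1*s2 + s1*s3 + s2*s3
def cδ : ℕ := a1*a2 + a1*a3 + a2*a3 + a1*a2*a3
def cε : ℕ := s1*(a2+a3+a2*a3) + s2*(a1+a3+a1*a3) + s3*(a1+a2+a1*a2)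
def cζ : ℕ := s2*s3*(1+a1) + s1*s3*(1+a2) + s1*s2*(1+a3)
def cη : ℕ := s1*s2*s3

noncomputable def RR3 : ℝ[X] :=
  (cα a1 a2 a3 : ℝ[X]) * (X^2*(X-1)*(X-2)) - (cδ a1 a2 a3 : ℝ[X]) * X^3
noncomputable def RR2 : ℝ[X] :=
  (cβ s1 s2 s3 a1 a2 a3 : ℝ[X]) * (X^2*(X-1)^2*(X-2)^2)
    - (cε s1 s2 s3 a1 a2 a3 : ℝ[X]) * (X^3*(X-1)*(X-2))
noncomputable def RR1 : ℝ[X] :=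
  (cγ s1 s2 s3 : ℝ[X]) * (X^2*(X-1)^3*(X-2)^3)
    - (cζ s1 s2 s3 a1 a2 a3 : ℝ[X]) * (X^3*(X-1)^2*(X-2)^2)
noncomputable def RR0 : ℝ[X] :=
  -((cη s1 s2 s3 : ℝ[X]) * (X^3*(X-1)^3*(X-2)^3))

lemma key_identity :
    APoly ![s1,s2,s3] ![1+a1,1+a2,1+a3] 0 * APoly ![s1,s2,s3] ![1+a1,1+a2,1+a3] 1 *
        APoly ![s1,s2,s3] ![1+a1,1+a2,1+a3] 2
      - APoly ![0,0,s1+s2+s3] ![1,1,1+(a1+a2+a3)] 0 *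
          APoly ![0,0,s1+s2+s3] ![1,1,1+(a1+a2+a3)] 1 *
          APoly ![0,0,s1+s2+s3] ![1,1,1+(a1+a2+a3)] 2 =
      Rq^3 * RR3 a1 a2 a3 + Rq^2 * RR2 s1 s2 s3 a1 a2 a3
        + Rq * RR1 s1 s2 s3 a1 a2 a3 + RR0 s1 s2 s3 := by
  simp only [APoly, Rw, Rq, RR3, RR2, RR1, RR0, cα, cβ, cγ, cδ, cε, cζ, cη,
    Matrix.cons_val_zero, Matrix.cons_val_one, Matrix.head_cons, Matrix.cons_val_two,
    Matrix.tail_cons]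
  push_cast
  ring

lemma sum_identity :
    APoly ![s1,s2,s3] ![1+a1,1+a2,1+a3] 0 + APoly ![s1,s2,s3] ![1+a1,1+a2,1+a3] 1 +
        APoly ![s1,s2,s3] ![1+a1,1+a2,1+a3] 2 =
      APoly ![0,0,s1+s2+s3] ![1,1,1+(a1+a2+a3)] 0 +
        APoly ![0,0,s1+s2+s3] ![1,1,1+(a1+a2+a3)] 1 +
        APoly ![0,0,s1+s2+s3] ![1,1,1+(a1+a2+a3)] 2 := by
  simp only [APoly, Rw, Rq,
    Matrix.cons_val_zero, Matrix.cons_val_one, Matrix.head_cons, Matrix.cons_val_two,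
    Matrix.tail_cons]
  push_cast
  ring

lemma qdiff_mul_identity :
    ((sLap (Gg 3 ![s1,s2,s3] ![1+a1,1+a2,1+a3])).charpoly
      - (sLap (Gg 3 ![0,0,s1+s2+s3] ![1,1,1+(a1+a2+a3)])).charpoly) * Rw^3 =
      ((X : ℝ[X]) - 1)^(3+(a1+a2+a3)) * Rq^(s1+s2+s3) *
        (Rq^3 * RR3 a1 a2 a3 + Rq^2 * RR2 s1 s2 s3 a1 a2 a3
          + Rq * RR1 s1 s2 s3 a1 a2 a3 + RR0 s1 s2 s3) := by
  have h1 := main_id ![s1,s2,s3] ![1+a1,1+a2,1+a3]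
  have h2 := main_id ![0,0,s1+s2+s3] ![1,1,1+(a1+a2+a3)]
  simp only [Matrix.cons_val_zero, Matrix.cons_val_one, Matrix.head_cons,
    Matrix.cons_val_two, Matrix.tail_cons, C1eq] at h1 h2
  rw [sub_mul, h1, h2,
    show (1+a1)+(1+a2)+(1+a3) = 3+(a1+a2+a3) by ring,
    show 1+1+(1+(a1+a2+a3)) = 3+(a1+a2+a3) by ring,
    show (0:ℕ)+0+(s1+s2+s3) = s1+s2+s3 by ring]
  have hkey := key_identity s1 s2 s3 a1 a2 a3
  have hsum := sum_identity s1 s2 s3 a1 a2 a3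
  linear_combination ((X:ℝ[X])-1)^(3+(a1+a2+a3)) * Rq^(s1+s2+s3) * hkey -
    ((X:ℝ[X])-1)^(3+(a1+a2+a3)) * Rq^(s1+s2+s3) * Rw^2 * hsum

lemma RR2_zero (h : s1 + s2 + s3 = 0) : RR2 s1 s2 s3 a1 a2 a3 = 0 := by
  obtain ⟨rfl, rfl, rfl⟩ : s1 = 0 ∧ s2 = 0 ∧ s3 = 0 := by omega
  norm_num [RR2, cβ, cε]

lemma RR1_zero (h : s1 + s2 + s3 ≤ 1) : RR1 s1 s2 s3 a1 a2 a3 = 0 := by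
  have h2 : (s1 = 0 ∧ s2 = 0) ∨ (s1 = 0 ∧ s3 = 0) ∨ (s2 = 0 ∧ s3 = 0) := by omega
  rcases h2 with ⟨rfl, rfl⟩ | ⟨rfl, rfl⟩ | ⟨rfl, rfl⟩ <;> norm_num [RR1, cγ, cζ]

lemma RR0_zero (h : s1 + s2 + s3 ≤ 2) : RR0 s1 s2 s3 = 0 := by
  have h2 : s1 = 0 ∨ s2 = 0 ∨ s3 = 0 := by omega
  rcases h2 with rfl | rfl | rfl <;> norm_num [RR0, cη]

lemma Rq_ne : (Rq : ℝ[X]) ≠ 0 := by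
  intro h
  have h2 := poson_Rq.2.2 2 (by norm_num) (by norm_num)
  rw [h] at h2
  simp at h2

lemma Rw_ne : (Rw : ℝ[X]) ≠ 0 := by
  rw [Rw]
  apply mul_ne_zero _ Rq_ne
  rw [show ((X:ℝ[X]) - 1) = X - C 1 from by rw [C1eq]]
  exact Polynomial.X_sub_C_ne_zero 1

/-- The truncated-exponent form `W`. -/
noncomputable def WW : ℝ[X] :=
  Rq^(s1+s2+s3) * RR3 a1 a2 a3 + Rq^(s1+s2+s3-1) * RR2 s1 s2 s3 a1 a2 a3
    + Rq^(s1+s2+s3-2) * RR1 s1 s2 s3 a1 a2 a3 + Rq^(s1+s2+s3-3) * RR0 s1 s2 s3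

lemma qdiff_decomp :
    (sLap (Gg 3 ![s1,s2,s3] ![1+a1,1+a2,1+a3])).charpoly
      - (sLap (Gg 3 ![0,0,s1+s2+s3] ![1,1,1+(a1+a2+a3)])).charpoly =
    ((X : ℝ[X]) - 1)^(a1+a2+a3) * WW s1 s2 s3 a1 a2 a3 := by
  apply mul_right_cancel₀ (pow_ne_zero 3 Rw_ne)
  rw [qdiff_mul_identity]
  rw [show (Rw^3 : ℝ[X]) = ((X:ℝ[X])-1)^3 * Rq^3 from by rw [Rw]; ring]
  set S := s1 + s2 + s3 with hS
  have e2' : (Rq^(S-1) * RR2 s1 s2 s3 a1 a2 a3) * Rq^3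
      = Rq^S * (Rq^2 * RR2 s1 s2 s3 a1 a2 a3) := by
    rcases Nat.eq_zero_or_pos S with h | h
    · rw [RR2_zero s1 s2 s3 a1 a2 a3 h]; ring
    · calc (Rq^(S-1) * RR2 s1 s2 s3 a1 a2 a3) * Rq^3
          = Rq^((S-1)+3) * RR2 s1 s2 s3 a1 a2 a3 := by rw [pow_add]; ring
        _ = Rq^(S+2) * RR2 s1 s2 s3 a1 a2 a3 := by rw [show S-1+3 = S+2 by omega]
        _ = Rq^S * (Rq^2 * RR2 s1 s2 s3 a1 a2 a3) := by rw [pow_add]; ring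
  have e1' : (Rq^(S-2) * RR1 s1 s2 s3 a1 a2 a3) * Rq^3
      = Rq^S * (Rq * RR1 s1 s2 s3 a1 a2 a3) := by
    rcases le_or_gt S 1 with h | h
    · rw [RR1_zero s1 s2 s3 a1 a2 a3 h]; ring
    · calc (Rq^(S-2) * RR1 s1 s2 s3 a1 a2 a3) * Rq^3
          = Rq^((S-2)+3) * RR1 s1 s2 s3 a1 a2 a3 := by rw [pow_add]; ring
        _ = Rq^(S+1) * RR1 s1 s2 s3 a1 a2 a3 := by rw [show S-2+3 = S+1 by omega]
        _ = Rq^S * (Rq * RR1 s1 s2 s3 a1 a2 a3) := by rw [pow_add]; ring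
  have e0' : (Rq^(S-3) * RR0 s1 s2 s3) * Rq^3 = Rq^S * RR0 s1 s2 s3 := by
    rcases le_or_gt S 2 with h | h
    · rw [RR0_zero s1 s2 s3 h]; ring
    · calc (Rq^(S-3) * RR0 s1 s2 s3) * Rq^3
          = Rq^((S-3)+3) * RR0 s1 s2 s3 := by rw [pow_add]; ring
        _ = Rq^S * RR0 s1 s2 s3 := by rw [show S-3+3 = S by omega]
  have hW : WW s1 s2 s3 a1 a2 a3 * Rq^3 =
      Rq^S * (Rq^3 * RR3 a1 a2 a3 + Rq^2 * RR2 s1 s2 s3 a1 a2 a3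
        + Rq * RR1 s1 s2 s3 a1 a2 a3 + RR0 s1 s2 s3) := by
    rw [WW]
    calc (Rq^S * RR3 a1 a2 a3 + Rq^(S-1) * RR2 s1 s2 s3 a1 a2 a3
          + Rq^(S-2) * RR1 s1 s2 s3 a1 a2 a3 + Rq^(S-3) * RR0 s1 s2 s3) * Rq^3
        = (Rq^S * RR3 a1 a2 a3) * Rq^3 + (Rq^(S-1) * RR2 s1 s2 s3 a1 a2 a3) * Rq^3
          + (Rq^(S-2) * RR1 s1 s2 s3 a1 a2 a3) * Rq^3
          + (Rq^(S-3) * RR0 s1 s2 s3) * Rq^3 := by ring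
      _ = Rq^S * (Rq^3 * RR3 a1 a2 a3) + Rq^S * (Rq^2 * RR2 s1 s2 s3 a1 a2 a3)
          + Rq^S * (Rq * RR1 s1 s2 s3 a1 a2 a3) + Rq^S * RR0 s1 s2 s3 := by
            rw [e2', e1', e0']; ring
      _ = _ := by ring
  symm
  calc ((X:ℝ[X]) - 1)^(a1+a2+a3) * WW s1 s2 s3 a1 a2 a3 * (((X:ℝ[X])-1)^3 * Rq^3)
      = ((X:ℝ[X]) - 1)^(3+(a1+a2+a3)) * (WW s1 s2 s3 a1 a2 a3 * Rq^3) := by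
        rw [pow_add]; ring
    _ = _ := by rw [hW]; ring

end decomp
section decomp2
variable (s1 s2 s3 a1 a2 a3 : ℕ)

lemma pos_base4 : PosOn ((X:ℝ[X])^2*(X-1)*(X-2)) 4 2 4 := by
  have h1 := poson_pow poson_X 2
  norm_num at h1
  have h3 := poson_mul (poson_mul h1 poson_Xsub1) poson_Xsub2
  norm_num at h3
  exact h3

lemma pos_base6 : PosOn ((X:ℝ[X])^2*(X-1)^2*(X-2)^2) 6 2 6 := by
  have h1 := poson_pow poson_X 2
  have h2 := poson_pow poson_Xsub1 2
  have h4 := poson_pow poson_Xsub2 2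
  norm_num at h1 h2 h4
  have h3 := poson_mul (poson_mul h1 h2) h4
  norm_num at h3
  exact h3

lemma pos_base8 : PosOn ((X:ℝ[X])^2*(X-1)^3*(X-2)^3) 8 2 8 := by
  have h1 := poson_pow poson_X 2
  have h2 := poson_pow poson_Xsub1 3
  have h4 := poson_pow poson_Xsub2 3
  norm_num at h1 h2 h4
  have h3 := poson_mul (poson_mul h1 h2) h4
  norm_num at h3
  exact h3

lemma alt_x3 : AltNN 3 ((X:ℝ[X])^3) := by
  have h := (poson_pow poson_X 3).1
  norm_num at h
  exact h

lemma alt_aux5 : AltNN 5 ((X:ℝ[X])^3*(X-1)*(X-2)) := by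
  have h := altnn_mul (altnn_mul alt_x3 poson_Xsub1.1) poson_Xsub2.1
  norm_num at h
  exact h

lemma alt_aux7 : AltNN 7 ((X:ℝ[X])^3*(X-1)^2*(X-2)^2) := by
  have h2 := poson_pow poson_Xsub1 2
  have h4 := poson_pow poson_Xsub2 2
  norm_num at h2 h4
  have h := altnn_mul (altnn_mul alt_x3 h2.1) h4.1
  norm_num at h
  exact h

lemma alt_aux9 : AltNN 9 ((X:ℝ[X])^3*(X-1)^3*(X-2)^3) := by
  have h2 := poson_pow poson_Xsub1 3
  have h4 := poson_pow poson_Xsub2 3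
  norm_num at h2 h4
  have h := altnn_mul (altnn_mul alt_x3 h2.1) h4.1
  norm_num at h
  exact h

lemma altRR3 : AltNN 4 (RR3 a1 a2 a3) := by
  rw [RR3, sub_eq_add_neg]
  exact altnn_add (altnn_natmul _ (pos_base4).1)
    (altnn_neg (altnn_natmul _ alt_x3))

lemma altRR2 : AltNN 6 (RR2 s1 s2 s3 a1 a2 a3) := by
  rw [RR2, sub_eq_add_neg]
  exact altnn_add (altnn_natmul _ (pos_base6).1)
    (altnn_neg (altnn_natmul _ alt_aux5))

lemma altRR1 : AltNN 8 (RR1 s1 s2 s3 a1 a2 a3) := by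
  rw [RR1, sub_eq_add_neg]
  exact altnn_add (altnn_natmul _ (pos_base8).1)
    (altnn_neg (altnn_natmul _ alt_aux7))

lemma altRR0 : AltNN 10 (RR0 s1 s2 s3) := by
  rw [RR0]
  exact altnn_neg (altnn_natmul _ alt_aux9)

lemma posRR3 (h : 0 < cα a1 a2 a3) : PosOn (RR3 a1 a2 a3) 4 2 4 := by
  rw [RR3, sub_eq_add_neg]
  exact poson_add_altnn (poson_natmul h pos_base4) (altnn_neg (altnn_natmul _ alt_x3))

lemma posRR2 (h : 0 < cβ s1 s2 s3 a1 a2 a3) : PosOn (RR2 s1 s2 s3 a1 a2 a3) 6 2 6 := by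
  rw [RR2, sub_eq_add_neg]
  exact poson_add_altnn (poson_natmul h pos_base6) (altnn_neg (altnn_natmul _ alt_aux5))

lemma posRR1 (h : 0 < cγ s1 s2 s3) : PosOn (RR1 s1 s2 s3 a1 a2 a3) 8 2 8 := by
  rw [RR1, sub_eq_add_neg]
  exact poson_add_altnn (poson_natmul h pos_base8) (altnn_neg (altnn_natmul _ alt_aux7))

lemma altWW : AltNN (2*(s1+s2+s3)+4) (WW s1 s2 s3 a1 a2 a3) := by
  set S := s1 + s2 + s3 with hS
  have hq : ∀ m : ℕ, AltNN (2*m) (Rq^m) := by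
    intro m
    have h := (poson_pow poson_Rq m).1
    exact altnn_congr (by omega) h
  have h3 : AltNN (2*S+4) (Rq^S * RR3 a1 a2 a3) := altnn_mul (hq S) (altRR3 a1 a2 a3)
  have h2 : AltNN (2*S+4) (Rq^(S-1) * RR2 s1 s2 s3 a1 a2 a3) :=
    altnn_congr (by omega) (altnn_mul (hq (S-1)) (altRR2 s1 s2 s3 a1 a2 a3))
  have h1 : AltNN (2*S+4) (Rq^(S-2) * RR1 s1 s2 s3 a1 a2 a3) :=
    altnn_congr (by omega) (altnn_mul (hq (S-2)) (altRR1 s1 s2 s3 a1 a2 a3))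
  have h0 : AltNN (2*S+4) (Rq^(S-3) * RR0 s1 s2 s3) :=
    altnn_congr (by omega) (altnn_mul (hq (S-3)) (altRR0 s1 s2 s3))
  exact altnn_add (altnn_add (altnn_add h3 h2) h1) h0

lemma alt_qdiff : AltNN ((a1+a2+a3) + (2*(s1+s2+s3)+4))
    ((sLap (Gg 3 ![s1,s2,s3] ![1+a1,1+a2,1+a3])).charpoly
      - (sLap (Gg 3 ![0,0,s1+s2+s3] ![1,1,1+(a1+a2+a3)])).charpoly) := by
  rw [qdiff_decomp]
  have hx : AltNN (a1+a2+a3) (((X:ℝ[X]) - 1)^(a1+a2+a3)) := by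
    have h := (poson_pow poson_Xsub1 (a1+a2+a3)).1
    exact altnn_congr (by omega) h
  exact altnn_mul hx (altWW s1 s2 s3 a1 a2 a3)

lemma cβ_S (h : 0 < cβ s1 s2 s3 a1 a2 a3) : 1 ≤ s1 + s2 + s3 := by
  by_contra h'
  obtain ⟨rfl, rfl, rfl⟩ : s1 = 0 ∧ s2 = 0 ∧ s3 = 0 := by omega
  simp [cβ] at h

lemma cγ_S (h : 0 < cγ s1 s2 s3) : 2 ≤ s1 + s2 + s3 := by
  by_contra h'
  have h2 : (s1 = 0 ∧ s2 = 0) ∨ (s1 = 0 ∧ s3 = 0) ∨ (s2 = 0 ∧ s3 = 0) := by omega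
  rcases h2 with ⟨rfl, rfl⟩ | ⟨rfl, rfl⟩ | ⟨rfl, rfl⟩ <;> simp [cγ] at h

lemma pos_qdiff (h : 0 < cα a1 a2 a3 ∨ 0 < cβ s1 s2 s3 a1 a2 a3 ∨ 0 < cγ s1 s2 s3) :
    PosOn ((sLap (Gg 3 ![s1,s2,s3] ![1+a1,1+a2,1+a3])).charpoly
        - (sLap (Gg 3 ![0,0,s1+s2+s3] ![1,1,1+(a1+a2+a3)])).charpoly)
      ((a1+a2+a3) + (2*(s1+s2+s3)+4)) 2 ((a1+a2+a3) + (2*(s1+s2+s3)+4)) := by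
  rw [qdiff_decomp]
  set S := s1 + s2 + s3 with hS
  have hq : ∀ m : ℕ, PosOn (Rq^m) (2*m) 0 (2*m) := by
    intro m
    have h := poson_pow poson_Rq m
    rw [show m*2 = 2*m by ring, show m*0 = 0 by ring] at h
    exact h
  have hWW : PosOn (WW s1 s2 s3 a1 a2 a3) (2*S+4) 2 (2*S+4) := by
    rcases h with hα | hβ | hγ
    · have post3 : PosOn (Rq^S * RR3 a1 a2 a3) (2*S+4) 2 (2*S+4) := by
        have h := poson_mul (hq S) (posRR3 a1 a2 a3 hα)
        rw [show 0+2 = 2 by ring] at h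
        exact h
      have hre : WW s1 s2 s3 a1 a2 a3 = Rq^S * RR3 a1 a2 a3 +
          (Rq^(S-1) * RR2 s1 s2 s3 a1 a2 a3 + Rq^(S-2) * RR1 s1 s2 s3 a1 a2 a3
            + Rq^(S-3) * RR0 s1 s2 s3) := by rw [WW]; ring
      rw [hre]
      refine poson_add_altnn post3 (altnn_add (altnn_add ?_ ?_) ?_)
      · exact altnn_congr (by omega) (altnn_mul (hq (S-1)).1 (altRR2 s1 s2 s3 a1 a2 a3))
      · exact altnn_congr (by omega) (altnn_mul (hq (S-2)).1 (altRR1 s1 s2 s3 a1 a2 a3))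
      · exact altnn_congr (by omega) (altnn_mul (hq (S-3)).1 (altRR0 s1 s2 s3))
    · have hS1 : 1 ≤ S := cβ_S s1 s2 s3 a1 a2 a3 hβ
      have post2 : PosOn (Rq^(S-1) * RR2 s1 s2 s3 a1 a2 a3) (2*S+4) 2 (2*S+4) := by
        have h := poson_mul (hq (S-1)) (posRR2 s1 s2 s3 a1 a2 a3 hβ)
        rw [show 0+2 = 2 by ring, show 2*(S-1)+6 = 2*S+4 by omega] at h
        exact h
      have hre : WW s1 s2 s3 a1 a2 a3 = Rq^(S-1) * RR2 s1 s2 s3 a1 a2 a3 +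
          (Rq^S * RR3 a1 a2 a3 + Rq^(S-2) * RR1 s1 s2 s3 a1 a2 a3
            + Rq^(S-3) * RR0 s1 s2 s3) := by rw [WW]; ring
      rw [hre]
      refine poson_add_altnn post2 (altnn_add (altnn_add ?_ ?_) ?_)
      · exact altnn_congr (by omega) (altnn_mul (hq S).1 (altRR3 a1 a2 a3))
      · exact altnn_congr (by omega) (altnn_mul (hq (S-2)).1 (altRR1 s1 s2 s3 a1 a2 a3))
      · exact altnn_congr (by omega) (altnn_mul (hq (S-3)).1 (altRR0 s1 s2 s3))
    · have hS2 : 2 ≤ S := cγ_S s1 s2 s3 hγ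
      have post1 : PosOn (Rq^(S-2) * RR1 s1 s2 s3 a1 a2 a3) (2*S+4) 2 (2*S+4) := by
        have h := poson_mul (hq (S-2)) (posRR1 s1 s2 s3 a1 a2 a3 hγ)
        rw [show 0+2 = 2 by ring, show 2*(S-2)+8 = 2*S+4 by omega] at h
        exact h
      have hre : WW s1 s2 s3 a1 a2 a3 = Rq^(S-2) * RR1 s1 s2 s3 a1 a2 a3 +
          (Rq^S * RR3 a1 a2 a3 + Rq^(S-1) * RR2 s1 s2 s3 a1 a2 a3
            + Rq^(S-3) * RR0 s1 s2 s3) := by rw [WW]; ring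
      rw [hre]
      refine poson_add_altnn post1 (altnn_add (altnn_add ?_ ?_) ?_)
      · exact altnn_congr (by omega) (altnn_mul (hq S).1 (altRR3 a1 a2 a3))
      · exact altnn_congr (by omega) (altnn_mul (hq (S-1)).1 (altRR2 s1 s2 s3 a1 a2 a3))
      · exact altnn_congr (by omega) (altnn_mul (hq (S-3)).1 (altRR0 s1 s2 s3))
  have hx : PosOn (((X:ℝ[X]) - 1)^(a1+a2+a3)) (a1+a2+a3) 0 (a1+a2+a3) := by
    have h := poson_pow poson_Xsub1 (a1+a2+a3)
    rw [show (a1+a2+a3)*1 = a1+a2+a3 by ring, show (a1+a2+a3)*0 = 0 by ring] at h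
    exact h
  have := poson_mul hx hWW
  rw [show 0+2 = 2 by ring] at this
  exact this

end decomp2
section iso
variable (s t s' t' : Fin 3 → ℕ)

noncomputable def ggIso (π : Equiv.Perm (Fin 3))
    (hs : ∀ i, s' (π i) = s i) (ht : ∀ i, t' (π i) = t i) :
    (Gg 3 s t) ≃g (Gg 3 s' t') where
  toEquiv := Equiv.sumCongr π (Equiv.sumCongr
    (Equiv.sigmaCongr π (fun i => Equiv.prodCongr (finCongr (hs i).symm) (Equiv.refl (Fin 2))))
    (Equiv.sigmaCongr π (fun i => finCongr (ht i).symm)))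
  map_rel_iff' := by
    set pe : Pty s ≃ Pty s' :=
      Equiv.sigmaCongr π (fun i => Equiv.prodCongr (finCongr (hs i).symm) (Equiv.refl (Fin 2)))
      with hpe
    set ee : Ety t ≃ Ety t' :=
      Equiv.sigmaCongr π (fun i => finCongr (ht i).symm) with hee
    intro x y
    rcases x with i | (p | e) <;> rcases y with j | (q | f)
    · show (Gg 3 s' t').Adj (Sum.inl (π i)) (Sum.inl (π j)) ↔ _
      rw [adj_inl_inl, adj_inl_inl]
      constructor
      · intro h hc
        exact h (by rw [hc])
      · intro h hc
        exact h (π.injective hc)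
    · rcases q with ⟨jq, b, l⟩
      show (Gg 3 s' t').Adj (Sum.inl (π i))
        (Sum.inr (Sum.inl ⟨π jq, ((finCongr (hs jq).symm) b, l)⟩)) ↔ _
      rw [adj_inl_path, adj_inl_path]
      show π jq = π i ∧ l = 0 ↔ jq = i ∧ l = 0
      exact and_congr ⟨fun h => π.injective h, fun h => by rw [h]⟩ Iff.rfl
    · rcases f with ⟨jf, b⟩
      show (Gg 3 s' t').Adj (Sum.inl (π i))
        (Sum.inr (Sum.inr ⟨π jf, (finCongr (ht jf).symm) b⟩)) ↔ _
      rw [adj_inl_pend, adj_inl_pend]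
      show π jf = π i ↔ jf = i
      exact ⟨fun h => π.injective h, fun h => by rw [h]⟩
    · rcases p with ⟨ip, a, k⟩
      show (Gg 3 s' t').Adj (Sum.inr (Sum.inl ⟨π ip, ((finCongr (hs ip).symm) a, k)⟩))
        (Sum.inl (π j)) ↔ _
      rw [(Gg 3 s' t').adj_comm, (Gg 3 s t).adj_comm, adj_inl_path, adj_inl_path]
      show π ip = π j ∧ k = 0 ↔ ip = j ∧ k = 0
      exact and_congr ⟨fun h => π.injective h, fun h => by rw [h]⟩ Iff.rfl
    · rcases p with ⟨ip, a, k⟩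
      rcases q with ⟨iq, b, l⟩
      show (Gg 3 s' t').Adj (Sum.inr (Sum.inl (pe ⟨ip, (a, k)⟩)))
        (Sum.inr (Sum.inl (pe ⟨iq, (b, l)⟩))) ↔ _
      rw [adj_path_path, adj_path_path]
      show (k = 0 ∧ pe ⟨iq, (b, l)⟩ = pe ⟨ip, (a, 1)⟩) ∨
          (l = 0 ∧ pe ⟨ip, (a, k)⟩ = pe ⟨iq, (b, 1)⟩) ↔ _
      rw [pe.apply_eq_iff_eq, pe.apply_eq_iff_eq]
    · rcases p with ⟨ip, a, k⟩
      rcases f with ⟨jf, b⟩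
      exact iff_of_false (adj_path_pend s' t' _ _) (adj_path_pend s t _ _)
    · rcases e with ⟨ie, b⟩
      show (Gg 3 s' t').Adj (Sum.inr (Sum.inr ⟨π ie, (finCongr (ht ie).symm) b⟩))
        (Sum.inl (π j)) ↔ _
      rw [(Gg 3 s' t').adj_comm, (Gg 3 s t).adj_comm, adj_inl_pend, adj_inl_pend]
      show π ie = π j ↔ ie = j
      exact ⟨fun h => π.injective h, fun h => by rw [h]⟩
    · rcases e with ⟨ie, b⟩
      rcases q with ⟨iq, c, l⟩
      rw [(Gg 3 s' t').adj_comm, (Gg 3 s t).adj_comm]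
      exact iff_of_false (adj_path_pend s' t' _ _) (adj_path_pend s t _ _)
    · rcases e with ⟨ie, b⟩
      rcases f with ⟨jf, c⟩
      exact iff_of_false (adj_pend_pend s' t' _ _) (adj_pend_pend s t _ _)

end iso
section final

lemma card_GgV (s t : Fin 3 → ℕ) :
    Fintype.card (GgV 3 s t) = 3 + 2*(s 0 + s 1 + s 2) + (t 0 + t 1 + t 2) := by
  simp only [GgV, Fintype.card_sum, Fintype.card_sigma, Fintype.card_prod, Fintype.card_fin,
    Fin.sum_univ_three]
  ring

lemma matching_cases (s1 s2 s3 a1 a2 a3 : ℕ) (h1 : cα a1 a2 a3 = 0)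
    (h2 : cβ s1 s2 s3 a1 a2 a3 = 0) (h3 : cγ s1 s2 s3 = 0) :
    (s1 = 0 ∧ a1 = 0 ∧ s2 = 0 ∧ a2 = 0) ∨ (s1 = 0 ∧ a1 = 0 ∧ s3 = 0 ∧ a3 = 0) ∨
      (s2 = 0 ∧ a2 = 0 ∧ s3 = 0 ∧ a3 = 0) := by
  simp only [cα, cβ, cγ, Nat.add_eq_zero, Nat.mul_eq_zero] at h1 h2 h3
  rcases Nat.eq_zero_or_pos s1 with rfl | hs1 <;>
    rcases Nat.eq_zero_or_pos s2 with rfl | hs2 <;>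
    rcases Nat.eq_zero_or_pos s3 with rfl | hs3 <;>
    rcases Nat.eq_zero_or_pos a1 with rfl | ha1 <;>
    rcases Nat.eq_zero_or_pos a2 with rfl | ha2 <;>
    rcases Nat.eq_zero_or_pos a3 with rfl | ha3 <;>
    simp_all [Nat.pos_iff_ne_zero]

theorem signlessLaplacianCoeff_G3_moveToThird'
    (s1 t1 s2 t2 s3 t3 n : ℕ) (ht1 : 1 ≤ t1) (ht2 : 1 ≤ t2) (ht3 : 1 ≤ t3)
    (hn : n = 3 + (2 * s1 + t1) + (2 * s2 + t2) + (2 * s3 + t3)) :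
    (∀ i ≤ n,
      phi (Gg 3 ![0, 0, s1 + s2 + s3] ![1, 1, t1 + t2 + t3 - 2]) i ≤
        phi (Gg 3 ![s1, s2, s3] ![t1, t2, t3]) i) ∧
    (¬ Nonempty ((Gg 3 ![s1, s2, s3] ![t1, t2, t3]) ≃g
        (Gg 3 ![0, 0, s1 + s2 + s3] ![1, 1, t1 + t2 + t3 - 2])) →
      ∀ i, 2 ≤ i → i ≤ n - 2 →
        phi (Gg 3 ![0, 0, s1 + s2 + s3] ![1, 1, t1 + t2 + t3 - 2]) i <
          phi (Gg 3 ![s1, s2, s3] ![t1, t2, t3]) i) := by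
  obtain ⟨a1, rfl⟩ := Nat.exists_eq_add_of_le ht1
  obtain ⟨a2, rfl⟩ := Nat.exists_eq_add_of_le ht2
  obtain ⟨a3, rfl⟩ := Nat.exists_eq_add_of_le ht3
  have hTvec : ![1, 1, (1+a1) + (1+a2) + (1+a3) - 2] = ![1, 1, 1+(a1+a2+a3)] := by
    funext i
    fin_cases i <;> simp <;> omega
  rw [hTvec]
  subst hn
  have hcard : Fintype.card (GgV 3 ![s1,s2,s3] ![1+a1,1+a2,1+a3]) =
      3 + (2 * s1 + (1+a1)) + (2 * s2 + (1+a2)) + (2 * s3 + (1+a3)) := by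
    rw [card_GgV]
    simp only [Matrix.cons_val_zero, Matrix.cons_val_one, Matrix.head_cons,
      Matrix.cons_val_two, Matrix.tail_cons]
    ring
  have hcard' : Fintype.card (GgV 3 ![0,0,s1+s2+s3] ![1,1,1+(a1+a2+a3)]) =
      3 + (2 * s1 + (1+a1)) + (2 * s2 + (1+a2)) + (2 * s3 + (1+a3)) := by
    rw [card_GgV]
    simp only [Matrix.cons_val_zero, Matrix.cons_val_one, Matrix.head_cons,
      Matrix.cons_val_two, Matrix.tail_cons]
    ring
  set n := 3 + (2 * s1 + (1+a1)) + (2 * s2 + (1+a2)) + (2 * s3 + (1+a3)) with hn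
  constructor
  · intro i hi
    rw [phi, phi, QPoly, QPoly, hcard, hcard']
    have halt := alt_qdiff s1 s2 s3 a1 a2 a3
    have h2 := altnn_congr
      (show ((a1+a2+a3) + (2*(s1+s2+s3)+4)) % 2 = n % 2 by omega) halt
    have h3 := h2 (n - i)
    rw [Polynomial.coeff_sub] at h3
    have hsgn : ((-1:ℝ))^(n+(n-i)) = (-1)^i := neg_one_pow_congr' (by omega)
    rw [hsgn] at h3
    linarith [h3]
  · intro hiso i hi2 hin2
    have hpos : 0 < cα a1 a2 a3 ∨ 0 < cβ s1 s2 s3 a1 a2 a3 ∨ 0 < cγ s1 s2 s3 := by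
      by_contra hcon
      push_neg at hcon
      obtain ⟨h1, h2, h3⟩ := hcon
      have hm := matching_cases s1 s2 s3 a1 a2 a3 (by omega) (by omega) (by omega)
      apply hiso
      rcases hm with ⟨rfl, rfl, rfl, rfl⟩ | ⟨rfl, rfl, rfl, rfl⟩ | ⟨rfl, rfl, rfl, rfl⟩
      · refine ⟨ggIso _ _ _ _ (Equiv.refl (Fin 3)) ?_ ?_⟩ <;>
          · intro i
            fin_cases i <;> simp <;> omega
      · refine ⟨ggIso _ _ _ _ (Equiv.swap (1 : Fin 3) 2) ?_ ?_⟩ <;>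
          · intro i
            fin_cases i <;> simp [Equiv.swap_apply_def] <;> omega
      · refine ⟨ggIso _ _ _ _
          (⟨fun i => ![2,0,1] i, fun i => ![1,2,0] i, by decide, by decide⟩ :
            Equiv.Perm (Fin 3)) ?_ ?_⟩ <;>
          · intro i
            fin_cases i <;> simp <;> omega
    have hposon := pos_qdiff s1 s2 s3 a1 a2 a3 hpos
    rw [phi, phi, QPoly, QPoly, hcard, hcard']
    have h4 := hposon.2.2 (n - i) (by omega) (by omega)
    rw [Polynomial.coeff_sub] at h4
    have hsgn : ((-1:ℝ))^((a1+a2+a3) + (2*(s1+s2+s3)+4) + (n-i)) = (-1)^i :=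
      neg_one_pow_congr' (by omega)
    rw [hsgn] at h4
    linarith [h4]

end final


theorem signlessLaplacianCoeff_G3_moveToThird
    (s1 t1 s2 t2 s3 t3 n : ℕ) (ht1 : 1 ≤ t1) (ht2 : 1 ≤ t2) (ht3 : 1 ≤ t3)
    (hn : n = 3 + (2 * s1 + t1) + (2 * s2 + t2) + (2 * s3 + t3)) :
    (∀ i ≤ n,
      phi (Gg 3 ![0, 0, s1 + s2 + s3] ![1, 1, t1 + t2 + t3 - 2]) i ≤
        phi (Gg 3 ![s1, s2, s3] ![t1, t2, t3]) i) ∧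
    (¬ Nonempty ((Gg 3 ![s1, s2, s3] ![t1, t2, t3]) ≃g
        (Gg 3 ![0, 0, s1 + s2 + s3] ![1, 1, t1 + t2 + t3 - 2])) →
      ∀ i, 2 ≤ i → i ≤ n - 2 →
        phi (Gg 3 ![0, 0, s1 + s2 + s3] ![1, 1, t1 + t2 + t3 - 2]) i <
          phi (Gg 3 ![s1, s2, s3] ![t1, t2, t3]) i) :=
  signlessLaplacianCoeff_G3_moveToThird' s1 t1 s2 t2 s3 t3 n ht1 ht2 ht3 hn
end

section
/- Let G_1 and G_2 be finite simple graphs with distinguished vertices u ∈ V(G_1) and v ∈ V(G_2), and let G = G_1|u : G_2|v be the graph obtained from the disjoint union of G_1 and G_2 by adding the edge uv. Then Q_G(x) = Q_{G_1}(x) Q_{G_2}(x) − Q_{G_1}(x) Q_{G_2|v}(x) − Q_{G_2}(x) Q_{G_1|u}(x). -/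
open Polynomial SimpleGraph Matrix

open scoped Classical

/-- `Q_{G|v}(x)`: the characteristic polynomial of the principal submatrix of `Q(G)`
obtained by deleting the row and column corresponding to the vertex `v`. -/
noncomputable def QPolyDel {V : Type*} [Fintype V] [DecidableEq V] (G : SimpleGraph V)
    (v : V) : Polynomial ℝ :=
  ((sLap G).submatrix (fun x : {x : V // x ≠ v} => (x : V))
    (fun x : {x : V // x ≠ v} => (x : V))).charpoly

/-- The graph `G_1|u : G_2|v`, obtained from the disjoint union of `G₁` and `G₂` by joining
the vertex `u` of `G₁` to the vertex `v` of `G₂` by an edge. -/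
def joinByEdge {V₁ V₂ : Type*} (G₁ : SimpleGraph V₁) (G₂ : SimpleGraph V₂) (u : V₁)
    (v : V₂) : SimpleGraph (V₁ ⊕ V₂) :=
  SimpleGraph.fromRel fun x y =>
    match x, y with
    | Sum.inl a, Sum.inl b => G₁.Adj a b
    | Sum.inr a, Sum.inr b => G₂.Adj a b
    | Sum.inl a, Sum.inr b => a = u ∧ b = v
    | _, _ => False

section AuxLemmas

variable {n : Type*} [Fintype n] [DecidableEq n] {R : Type*} [CommRing R]

/-- Cofactor lemma: if row `u` of `N` is the standard basis vector `e_u`, then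
`det N` equals the determinant of the principal submatrix deleting `u`. -/
lemma det_eq_det_submatrix_of_row_single (N : Matrix n n R) (u : n)
    (h : N u = Pi.single u 1) :
    N.det = (N.submatrix (fun x : {x : n // x ≠ u} => (x : n))
      (fun x : {x : n // x ≠ u} => (x : n))).det := by
  classical
  rw [← Matrix.det_submatrix_equiv_self (Equiv.sumCompl (· ≠ u)) N,
      ← Matrix.fromBlocks_toBlocks (N.submatrix (Equiv.sumCompl (· ≠ u)) (Equiv.sumCompl (· ≠ u)))]
  have h21 : (N.submatrix (Equiv.sumCompl (· ≠ u)) (Equiv.sumCompl (· ≠ u))).toBlocks₂₁ = 0 := by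
    ext i j
    have hi : (i : n) = u := not_not.mp i.2
    have hj : ¬ ((j : n) = u) := j.2
    simp [Matrix.toBlocks₂₁, hi, h, Pi.single_apply, hj]
  haveI : Unique {x : n // ¬ x ≠ u} :=
    ⟨⟨⟨u, by simp⟩⟩, fun x => Subtype.ext (not_not.mp x.2)⟩
  have h22 : (N.submatrix (Equiv.sumCompl (· ≠ u)) (Equiv.sumCompl (· ≠ u))).toBlocks₂₂.det = 1 := by
    rw [Matrix.det_unique]
    have hd : ((default : {x : n // ¬ x ≠ u}) : n) = u := not_not.mp (default : {x : n // ¬ x ≠ u}).2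
    simp [Matrix.toBlocks₂₂, hd, h, Pi.single_apply]
  have h11 : (N.submatrix (Equiv.sumCompl (· ≠ u)) (Equiv.sumCompl (· ≠ u))).toBlocks₁₁ =
      N.submatrix (fun x : {x : n // x ≠ u} => (x : n)) (fun x : {x : n // x ≠ u} => (x : n)) := by
    ext i j
    simp [Matrix.toBlocks₁₁]
  rw [h21, Matrix.det_fromBlocks_zero₂₁, h22, mul_one, h11]

lemma adjugate_eq_of_mul [IsDomain R] (A D : Matrix n n R) (hdet : A.det ≠ 0)
    (h : A * D = A.det • (1 : Matrix n n R)) : A.adjugate = D := by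
  have h2 : A.adjugate * (A * D) = A.adjugate * (A.det • (1 : Matrix n n R)) := by rw [h]
  rw [← Matrix.mul_assoc, Matrix.adjugate_mul, Matrix.smul_mul, Matrix.one_mul,
    Matrix.mul_smul, Matrix.mul_one] at h2
  ext i j
  have h3 := congrFun (congrFun h2 i) j
  simp only [Matrix.smul_apply, smul_eq_mul] at h3
  exact (mul_left_cancel₀ hdet h3).symm

lemma adjugate_fromBlocks_diag {m : Type*} [Fintype m] [DecidableEq m] [IsDomain R]
    (A : Matrix n n R) (B : Matrix m m R) (hA : A.det ≠ 0) (hB : B.det ≠ 0) :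
    (Matrix.fromBlocks A 0 0 B).adjugate =
      Matrix.fromBlocks (B.det • A.adjugate) 0 0 (A.det • B.adjugate) := by
  apply adjugate_eq_of_mul
  · rw [Matrix.det_fromBlocks_zero₂₁]; exact mul_ne_zero hA hB
  · rw [Matrix.fromBlocks_multiply]
    simp only [Matrix.mul_zero, Matrix.zero_mul, add_zero, zero_add,
      Matrix.mul_smul, Matrix.mul_adjugate]
    rw [Matrix.det_fromBlocks_zero₂₁, ← Matrix.fromBlocks_one, Matrix.fromBlocks_smul]
    simp [smul_smul, mul_comm]

lemma charmatrix_submatrix_injective {m : Type*} [Fintype m] [DecidableEq m]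
    (S : Matrix n n R) (f : m → n) (hf : Function.Injective f) :
    Matrix.charmatrix (S.submatrix f f) = (Matrix.charmatrix S).submatrix f f := by
  ext i j
  by_cases hij : i = j
  · subst hij
    simp [Matrix.charmatrix, Matrix.scalar, Matrix.diagonal_apply]
  · have : f i ≠ f j := fun hh => hij (hf hh)
    simp [Matrix.charmatrix, Matrix.scalar, Matrix.diagonal_apply, hij, this]

end AuxLemmas

section JoinLemmas

variable {V₁ V₂ : Type} [Fintype V₁] [Fintype V₂] [DecidableEq V₁] [DecidableEq V₂]
  (G₁ : SimpleGraph V₁) (G₂ : SimpleGraph V₂) (u : V₁) (v : V₂)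

lemma joinByEdge_adj_inl_inl (a b : V₁) :
    (joinByEdge G₁ G₂ u v).Adj (Sum.inl a) (Sum.inl b) ↔ G₁.Adj a b := by
  simp only [joinByEdge, SimpleGraph.fromRel_adj]
  constructor
  · rintro ⟨hne, h | h⟩
    · exact h
    · exact h.symm
  · intro h
    exact ⟨by simpa using h.ne, Or.inl h⟩

lemma joinByEdge_adj_inr_inr (a b : V₂) :
    (joinByEdge G₁ G₂ u v).Adj (Sum.inr a) (Sum.inr b) ↔ G₂.Adj a b := by
  simp only [joinByEdge, SimpleGraph.fromRel_adj]
  constructor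
  · rintro ⟨hne, h | h⟩
    · exact h
    · exact h.symm
  · intro h
    exact ⟨by simpa using h.ne, Or.inl h⟩

lemma joinByEdge_adj_inl_inr (a : V₁) (b : V₂) :
    (joinByEdge G₁ G₂ u v).Adj (Sum.inl a) (Sum.inr b) ↔ a = u ∧ b = v := by
  simp [joinByEdge, SimpleGraph.fromRel_adj]

lemma joinByEdge_adj_inr_inl (a : V₂) (b : V₁) :
    (joinByEdge G₁ G₂ u v).Adj (Sum.inr a) (Sum.inl b) ↔ b = u ∧ a = v := by
  simp [joinByEdge, SimpleGraph.fromRel_adj]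

lemma joinByEdge_deg_inl (a : V₁) :
    ((joinByEdge G₁ G₂ u v).neighborSet (Sum.inl a)).ncard =
      (G₁.neighborSet a).ncard + (if a = u then 1 else 0) := by
  have hset : (joinByEdge G₁ G₂ u v).neighborSet (Sum.inl a) =
      Sum.inl '' G₁.neighborSet a ∪ (if a = u then {Sum.inr v} else ∅) := by
    ext (x | x)
    · simp [SimpleGraph.neighborSet, joinByEdge_adj_inl_inl]
    · by_cases h : a = u <;>
        simp [SimpleGraph.neighborSet, joinByEdge_adj_inl_inr, h, eq_comm]
  rw [hset]
  by_cases h : a = u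
  · subst h
    rw [if_pos rfl, if_pos rfl,
      Set.ncard_union_eq (by simp) (Set.toFinite _) (Set.toFinite _),
      Set.ncard_image_of_injective _ Sum.inl_injective, Set.ncard_singleton]
  · simp [h, Set.ncard_image_of_injective _ Sum.inl_injective]

lemma joinByEdge_deg_inr (b : V₂) :
    ((joinByEdge G₁ G₂ u v).neighborSet (Sum.inr b)).ncard =
      (G₂.neighborSet b).ncard + (if b = v then 1 else 0) := by
  have hset : (joinByEdge G₁ G₂ u v).neighborSet (Sum.inr b) =
      Sum.inr '' G₂.neighborSet b ∪ (if b = v then {Sum.inl u} else ∅) := by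
    ext (x | x)
    · by_cases h : b = v <;>
        simp [SimpleGraph.neighborSet, joinByEdge_adj_inr_inl, h, eq_comm]
    · simp [SimpleGraph.neighborSet, joinByEdge_adj_inr_inr]
  rw [hset]
  by_cases h : b = v
  · subst h
    rw [if_pos rfl, if_pos rfl,
      Set.ncard_union_eq (by simp) (Set.toFinite _) (Set.toFinite _),
      Set.ncard_image_of_injective _ Sum.inr_injective, Set.ncard_singleton]
  · simp [h, Set.ncard_image_of_injective _ Sum.inr_injective]

lemma sLap_joinByEdge :
    sLap (joinByEdge G₁ G₂ u v) =
      Matrix.fromBlocks (sLap G₁) 0 0 (sLap G₂) +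
        Matrix.of (fun x y =>
          (if x = Sum.inl u ∨ x = Sum.inr v then (1 : ℝ) else 0) *
          (if y = Sum.inl u ∨ y = Sum.inr v then (1 : ℝ) else 0)) := by
  ext (a | a) (b | b) <;>
    simp only [sLap, Matrix.of_apply, Matrix.add_apply, Matrix.fromBlocks_apply₁₁,
      Matrix.fromBlocks_apply₁₂, Matrix.fromBlocks_apply₂₁, Matrix.fromBlocks_apply₂₂,
      joinByEdge_adj_inl_inl, joinByEdge_adj_inl_inr, joinByEdge_adj_inr_inl,
      joinByEdge_adj_inr_inr, joinByEdge_deg_inl, joinByEdge_deg_inr,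
      Sum.inl.injEq, Sum.inr.injEq, Matrix.zero_apply, reduceCtorEq, or_false, false_or]
  · by_cases hab : a = b <;> by_cases hau : a = u <;> by_cases hbu : b = u <;>
      subst_vars <;> simp_all
  · by_cases hau : a = u <;> by_cases hbv : b = v <;> subst_vars <;> simp_all
  · by_cases hau : b = u <;> by_cases hbv : a = v <;> subst_vars <;> simp_all
  · by_cases hab : a = b <;> by_cases hav : a = v <;> by_cases hbv : b = v <;>
      subst_vars <;> simp_all

end JoinLemmas

theorem QPoly_joinByEdge {V₁ V₂ : Type} [Fintype V₁] [Fintype V₂]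
    [DecidableEq V₁] [DecidableEq V₂]
    (G₁ : SimpleGraph V₁) (G₂ : SimpleGraph V₂) (u : V₁) (v : V₂) :
    QPoly (joinByEdge G₁ G₂ u v) =
      QPoly G₁ * QPoly G₂ - QPoly G₁ * QPolyDel G₂ v - QPoly G₂ * QPolyDel G₁ u := by
  classical
  set A := Matrix.charmatrix (sLap G₁) with hA
  set B := Matrix.charmatrix (sLap G₂) with hB
  set C0 := Matrix.fromBlocks A 0 0 B with hC0
  set uI : V₁ ⊕ V₂ := Sum.inl u with huI
  set vI : V₁ ⊕ V₂ := Sum.inr v with hvI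
  have huv : uI ≠ vI := by simp [huI, hvI]
  set w : V₁ ⊕ V₂ → Polynomial ℝ :=
    Pi.single uI 1 + Pi.single vI 1 with hw
  set E : Matrix (V₁ ⊕ V₂) (V₁ ⊕ V₂) ℝ := Matrix.of (fun x y =>
      (if x = Sum.inl u ∨ x = Sum.inr v then (1 : ℝ) else 0) *
      (if y = Sum.inl u ∨ y = Sum.inr v then (1 : ℝ) else 0)) with hE
  -- charmatrix
  have h2 : Matrix.charmatrix (Matrix.fromBlocks (sLap G₁) 0 0 (sLap G₂)) = C0 := by
    rw [Matrix.charmatrix_fromBlocks]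
    simp [hC0]
    exact ⟨hA.symm, hB.symm⟩
  have h1 : Matrix.charmatrix (sLap (joinByEdge G₁ G₂ u v)) = C0 - E.map Polynomial.C := by
    rw [sLap_joinByEdge, ← hE, ← h2]
    simp only [Matrix.charmatrix, map_add, RingHom.mapMatrix_apply]
    rw [sub_add_eq_sub_sub]
  -- row descriptions
  have hindw : ∀ y : V₁ ⊕ V₂,
      Polynomial.C (if y = Sum.inl u ∨ y = Sum.inr v then (1 : ℝ) else 0) = w y := by
    intro y
    rcases eq_or_ne y uI with rfl | hyu
    · simp [hw, Pi.single_apply, huI, hvI, huv]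
    · rcases eq_or_ne y vI with rfl | hyv
      · simp [hw, Pi.single_apply, huI, hvI, Ne.symm huv]
      · have h1' : ¬ (y = Sum.inl u) := by simpa [huI] using hyu
        have h2' : ¬ (y = Sum.inr v) := by simpa [hvI] using hyv
        simp [hw, Pi.single_apply, h1', h2', hyu, hyv]
  have hrowu : (C0 - E.map Polynomial.C) uI = C0 uI - w := by
    funext y
    have : E uI y = (if y = Sum.inl u ∨ y = Sum.inr v then (1 : ℝ) else 0) := by
      simp [hE, huI]
    simp [Matrix.sub_apply, Matrix.map_apply, this, hindw y]
  have hrowv : (C0 - E.map Polynomial.C) vI = C0 vI - w := by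
    funext y
    have : E vI y = (if y = Sum.inl u ∨ y = Sum.inr v then (1 : ℝ) else 0) := by
      simp [hE, hvI]
    simp [Matrix.sub_apply, Matrix.map_apply, this, hindw y]
  have hrowo : ∀ x, x ≠ uI → x ≠ vI → (C0 - E.map Polynomial.C) x = C0 x := by
    intro x hxu hxv
    funext y
    have h1' : ¬ (x = Sum.inl u) := by simpa [huI] using hxu
    have h2' : ¬ (x = Sum.inr v) := by simpa [hvI] using hxv
    simp [Matrix.sub_apply, Matrix.map_apply, hE, h1', h2']
  have hM : Matrix.charmatrix (sLap (joinByEdge G₁ G₂ u v)) =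
      (C0.updateRow uI (C0 uI - w)).updateRow vI (C0 vI - w) := by
    rw [h1]
    funext x
    by_cases hxv : x = vI
    · subst hxv
      rw [Matrix.updateRow_self]
      exact hrowv
    · rw [Matrix.updateRow_ne hxv]
      by_cases hxu : x = uI
      · subst hxu
        rw [Matrix.updateRow_self]
        exact hrowu
      · rw [Matrix.updateRow_ne hxu]
        exact hrowo x hxu hxv
  -- determinant expansion
  have hsub : ∀ (P : Matrix (V₁ ⊕ V₂) (V₁ ⊕ V₂) (Polynomial ℝ)) i r,
      (P.updateRow i (P i - r)).det = P.det - (P.updateRow i r).det := by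
    intro P i r
    have h := Matrix.det_updateRow_add P i (P i - r) r
    rw [sub_add_cancel, Matrix.updateRow_eq_self] at h
    rw [h]; ring
  have hrowN1 : (C0.updateRow uI (C0 uI - w)) vI = C0 vI :=
    Matrix.updateRow_ne (Ne.symm huv)
  have hcomm : (C0.updateRow uI (C0 uI - w)).updateRow vI w =
      (C0.updateRow vI w).updateRow uI ((C0.updateRow vI w) uI - w) := by
    have hCw : (C0.updateRow vI w) uI = C0 uI := Matrix.updateRow_ne huv
    rw [hCw]
    funext x
    by_cases hxu : x = uI
    · subst hxu
      simp [Matrix.updateRow_ne, Matrix.updateRow_self, huv]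
    · by_cases hxv : x = vI
      · subst hxv
        simp [Matrix.updateRow_ne, Matrix.updateRow_self, Ne.symm huv]
      · simp [Matrix.updateRow_ne, hxu, hxv]
  have hzero : ((C0.updateRow vI w).updateRow uI w).det = 0 := by
    apply Matrix.det_zero_of_row_eq huv
    rw [Matrix.updateRow_self, Matrix.updateRow_ne (Ne.symm huv), Matrix.updateRow_self]
  have hdet1 : (Matrix.charmatrix (sLap (joinByEdge G₁ G₂ u v))).det =
      C0.det - (C0.updateRow uI w).det - (C0.updateRow vI w).det := by
    rw [hM, ← hrowN1, hsub (C0.updateRow uI (C0 uI - w)) vI w, hsub C0 uI w, hcomm,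
      hsub (C0.updateRow vI w) uI w, hzero]
    ring
  -- adjugate values
  have hwdet : ∀ i, (C0.updateRow i w).det =
      C0.adjugate uI i + C0.adjugate vI i := by
    intro i
    rw [hw, Matrix.det_updateRow_add, Matrix.adjugate_apply, Matrix.adjugate_apply]
  have hQA : A.det = QPoly G₁ := rfl
  have hQB : B.det = QPoly G₂ := rfl
  have hAne : A.det ≠ 0 := (Matrix.charpoly_monic (sLap G₁)).ne_zero
  have hBne : B.det ≠ 0 := (Matrix.charpoly_monic (sLap G₂)).ne_zero
  have hadj := adjugate_fromBlocks_diag A B hAne hBne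
  have hadj_uu : C0.adjugate uI uI = B.det * A.adjugate u u := by
    rw [hC0, hadj, huI]
    simp [Matrix.fromBlocks_apply₁₁]
  have hadj_vv : C0.adjugate vI vI = A.det * B.adjugate v v := by
    rw [hC0, hadj, hvI]
    simp [Matrix.fromBlocks_apply₂₂]
  have hadj_uv : C0.adjugate uI vI = 0 := by
    rw [hC0, hadj, huI, hvI]
    simp
  have hadj_vu : C0.adjugate vI uI = 0 := by
    rw [hC0, hadj, huI, hvI]
    simp
  -- principal minors
  have hminor : ∀ {V : Type} [Fintype V] [DecidableEq V] (G : SimpleGraph V) (z : V),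
      (Matrix.charmatrix (sLap G)).adjugate z z = QPolyDel G z := by
    intro V _ _ G z
    rw [Matrix.adjugate_apply,
      det_eq_det_submatrix_of_row_single _ z (Matrix.updateRow_self)]
    have hsm : ((Matrix.charmatrix (sLap G)).updateRow z (Pi.single z 1)).submatrix
        (fun x : {x : V // x ≠ z} => (x : V)) (fun x : {x : V // x ≠ z} => (x : V)) =
        Matrix.charmatrix ((sLap G).submatrix
          (fun x : {x : V // x ≠ z} => (x : V)) (fun x : {x : V // x ≠ z} => (x : V))) := by
      rw [charmatrix_submatrix_injective _ _ Subtype.val_injective]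
      ext i j
      simp [Matrix.updateRow_ne i.2]
    rw [hsm]
    rfl
  -- assemble
  have hfinal : QPoly (joinByEdge G₁ G₂ u v) =
      (Matrix.charmatrix (sLap (joinByEdge G₁ G₂ u v))).det := rfl
  rw [hfinal, hdet1, hwdet uI, hwdet vI, hadj_uu, hadj_vv, hadj_uv, hadj_vu,
    hC0, Matrix.det_fromBlocks_zero₂₁, hminor G₁ u, hminor G₂ v, hQA, hQB]
  ring
end

section
/- Let H be a connected finite simple graph with |V(H)| ≥ 2, let v be a vertex of H, let k ≥ 0, and let G be the graph on n = |V(H)| + k vertices obtained from H by attaching k pendent vertices at v (i.e., adding k new vertices each adjacent only to v). Then Q_G(x) = (x−1)^k Q_H(x) − k x (x−1)^{k−1} Q_{H|v}(x). -/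
open Polynomial SimpleGraph Matrix

open scoped Classical

/-- The graph obtained from `H` by attaching `k` pendent vertices at the vertex `v`. -/
def addPendants {V : Type*} (H : SimpleGraph V) (v : V) (k : ℕ) :
    SimpleGraph (V ⊕ Fin k) :=
  SimpleGraph.fromRel fun x y =>
    match x, y with
    | Sum.inl a, Sum.inl b => H.Adj a b
    | Sum.inl a, Sum.inr _ => a = v
    | _, _ => False


section Helpers

lemma eval_charpoly' {n : Type*} [Fintype n] [DecidableEq n] (M : Matrix n n ℝ) (x : ℝ) :
    eval x M.charpoly = (x • (1 : Matrix n n ℝ) - M).det := by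
  have h := RingHom.map_det (evalRingHom x) (charmatrix M)
  rw [Matrix.charpoly, show eval x (charmatrix M).det = (evalRingHom x) (charmatrix M).det from rfl,
    h, RingHom.mapMatrix_apply]
  congr 1
  ext i j
  by_cases hij : i = j
  · subst hij; simp [charmatrix_apply_eq, Matrix.map_apply, Matrix.one_apply]
  · simp [charmatrix_apply_ne _ _ _ hij, Matrix.map_apply, Matrix.one_apply_ne hij]

lemma det_updateRow_single {n : Type*} [Fintype n] [DecidableEq n] (M : Matrix n n ℝ) (v : n) :
    (M.updateRow v (Pi.single v 1)).det =
      (M.submatrix (fun x : {x : n // x ≠ v} => (x : n)) (fun x : {x : n // x ≠ v} => (x : n))).det := by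
  classical
  haveI : Unique {x : n // ¬ x ≠ v} := ⟨⟨⟨v, by simp⟩⟩, fun a => Subtype.ext (by simpa using a.2)⟩
  set N := M.updateRow v (Pi.single v 1) with hN
  let e := Equiv.sumCompl (fun x : n => x ≠ v)
  rw [← Matrix.det_submatrix_equiv_self e N]
  rw [← Matrix.fromBlocks_toBlocks (N.submatrix e e)]
  have h21 : (N.submatrix e e).toBlocks₂₁ = 0 := by
    ext i j
    have hi : (e (Sum.inr i) : n) = v := by simpa [e] using not_ne_iff.mp i.2
    have hj : (e (Sum.inl j) : n) = (j : n) := by simp [e]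
    simp only [Matrix.toBlocks₂₁, Matrix.submatrix_apply, Matrix.of_apply]
    rw [hi, hj, hN]
    simp [Pi.single_apply, (j.2 : (j : n) ≠ v)]
  rw [h21, Matrix.det_fromBlocks_zero₂₁]
  have h22 : ((N.submatrix e e).toBlocks₂₂).det = 1 := by
    rw [Matrix.det_unique]
    have hd : (e (Sum.inr (default : {x : n // ¬ x ≠ v})) : n) = v := by
      simpa [e] using not_ne_iff.mp (default : {x : n // ¬ x ≠ v}).2
    simp only [Matrix.toBlocks₂₂, Matrix.of_apply, Matrix.submatrix_apply]
    rw [hd, hN]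
    simp
  rw [h22, mul_one]
  congr 1
  ext i j
  simp only [Matrix.toBlocks₁₁, Matrix.of_apply, Matrix.submatrix_apply]
  have he : e (Sum.inl i) = (i : n) := by simp [e]
  rw [he, hN, Matrix.updateRow_ne i.2]
  simp [e]

lemma det_add_stdBasis {n : Type*} [Fintype n] [DecidableEq n] (M : Matrix n n ℝ) (v : n) (c : ℝ) :
    (M + Matrix.single v v c).det =
      M.det + c * (M.submatrix (fun x : {x : n // x ≠ v} => (x : n)) (fun x : {x : n // x ≠ v} => (x : n))).det := by
  have h1 : M + Matrix.single v v c = M.updateRow v (M v + Pi.single v c) := by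
    ext i j
    by_cases hi : i = v
    · subst hi
      simp [Matrix.single, Pi.single_apply, eq_comm]
    · simp [Matrix.updateRow_ne hi, Matrix.single, Ne.symm hi]
  have h2 : (Pi.single v c : n → ℝ) = c • (Pi.single v 1 : n → ℝ) := by
    ext j; simp [Pi.single_apply, mul_ite]
  rw [h1, Matrix.det_updateRow_add, Matrix.updateRow_eq_self, h2, Matrix.det_updateRow_smul,
    det_updateRow_single]

variable {V : Type*} [Fintype V] [DecidableEq V] (H : SimpleGraph V) (v : V) (k : ℕ)

set_option linter.unusedSectionVars false

lemma adj_inl_inl_s11 (a b : V) : (addPendants H v k).Adj (Sum.inl a) (Sum.inl b) ↔ H.Adj a b := by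
  simp only [addPendants, fromRel_adj]
  constructor
  · rintro ⟨-, h | h⟩
    · exact h
    · exact h.symm
  · intro h
    exact ⟨by simpa using h.ne, Or.inl h⟩

lemma adj_inl_inr (a : V) (j : Fin k) :
    (addPendants H v k).Adj (Sum.inl a) (Sum.inr j) ↔ a = v := by
  simp [addPendants, fromRel_adj]

lemma adj_inr_inr (i j : Fin k) : ¬ (addPendants H v k).Adj (Sum.inr i) (Sum.inr j) := by
  simp [addPendants, fromRel_adj]

lemma nbr_inr (i : Fin k) :
    (addPendants H v k).neighborSet (Sum.inr i) = {Sum.inl v} := by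
  ext y
  cases y with
  | inl a => simp [SimpleGraph.mem_neighborSet, (addPendants H v k).adj_comm, adj_inl_inr]
  | inr j => simp [SimpleGraph.mem_neighborSet, adj_inr_inr, (addPendants H v k).adj_comm]

lemma nbr_inl (a : V) :
    (addPendants H v k).neighborSet (Sum.inl a) =
      Sum.inl '' (H.neighborSet a) ∪ (if a = v then Set.range (Sum.inr : Fin k → V ⊕ Fin k) else ∅) := by
  ext y
  cases y with
  | inl b => by_cases h : a = v <;>
      simp [SimpleGraph.mem_neighborSet, adj_inl_inl_s11, h]
  | inr j => by_cases h : a = v <;> simp [SimpleGraph.mem_neighborSet, adj_inl_inr, h]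

lemma nbr_inl_ncard (a : V) :
    ((addPendants H v k).neighborSet (Sum.inl a)).ncard =
      (H.neighborSet a).ncard + if a = v then k else 0 := by
  rw [nbr_inl]
  by_cases h : a = v
  · rw [if_pos h, if_pos h, Set.ncard_union_eq]
    · congr 1
      · exact Set.ncard_image_of_injective _ Sum.inl_injective
      · rw [← Set.image_univ, Set.ncard_image_of_injective _ Sum.inr_injective,
          Set.ncard_univ, Nat.card_eq_fintype_card, Fintype.card_fin]
    · rw [Set.disjoint_iff]
      rintro x ⟨⟨b, -, rfl⟩, ⟨j, hj⟩⟩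
      exact absurd hj (by simp)
  · rw [if_neg h, if_neg h, Set.union_empty,
      Set.ncard_image_of_injective _ Sum.inl_injective, add_zero]

lemma sLap_addPendants :
    sLap (addPendants H v k) =
      Matrix.fromBlocks (sLap H + Matrix.single v v (k : ℝ))
        (Matrix.of fun a (_ : Fin k) => if a = v then (1:ℝ) else 0)
        (Matrix.of fun (_ : Fin k) a => if a = v then (1:ℝ) else 0) 1 := by
  ext x y
  cases x with
  | inl a =>
    cases y with
    | inl b =>
      have hQ : Matrix.single v v (k:ℝ) a b = if a = v ∧ b = v then (k:ℝ) else 0 := by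
        simp only [Matrix.single, Matrix.of_apply]
        congr 1
        simp [eq_comm, and_comm]
      simp only [sLap, Matrix.of_apply, Matrix.fromBlocks_apply₁₁, Matrix.add_apply, hQ,
        adj_inl_inl_s11, Sum.inl.injEq, nbr_inl_ncard]
      by_cases hab : a = b
      · subst hab
        by_cases hav : a = v <;> simp [hav] <;> push_cast <;> ring
      · have hnv : ¬ (a = v ∧ b = v) := by rintro ⟨rfl, rfl⟩; exact hab rfl
        simp [hab, hnv]
    | inr j =>
      simp [sLap, adj_inl_inr]
  | inr i =>
    cases y with
    | inl b =>
      simp [sLap, (addPendants H v k).adj_comm, adj_inl_inr, eq_comm]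
    | inr j =>
      simp only [sLap, Matrix.of_apply, Matrix.fromBlocks_apply₂₂, nbr_inr]
      by_cases hij : i = j
      · subst hij; simp [adj_inr_inr]
      · simp [hij, adj_inr_inr, Matrix.one_apply_ne hij]

end Helpers

theorem QPoly_addPendants {V : Type} [Fintype V] [DecidableEq V]
    (H : SimpleGraph V) (hH : H.Connected) (hV : 2 ≤ Fintype.card V) (v : V) (k : ℕ) :
    QPoly (addPendants H v k) =
      (X - 1) ^ k * QPoly H - (k : Polynomial ℝ) * X * (X - 1) ^ (k - 1) * QPolyDel H v := by
  apply Polynomial.eq_of_infinite_eval_eq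
  apply Set.Infinite.mono (s := ({1}ᶜ : Set ℝ))
  swap
  · exact (Set.finite_singleton (1:ℝ)).infinite_compl
  intro x hx
  have hx1 : x ≠ 1 := hx
  have hsub : x - 1 ≠ 0 := sub_ne_zero.mpr hx1
  simp only [Set.mem_setOf_eq]
  -- abbreviations
  set Bm : Matrix V (Fin k) ℝ := Matrix.of fun a (_ : Fin k) => if a = v then (1:ℝ) else 0 with hBm
  set Cm : Matrix (Fin k) V ℝ := Matrix.of fun (_ : Fin k) a => if a = v then (1:ℝ) else 0 with hCm
  -- LHS
  rw [QPoly, eval_charpoly', sLap_addPendants]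
  have hsplit : x • (1 : Matrix (V ⊕ Fin k) (V ⊕ Fin k) ℝ) -
      Matrix.fromBlocks (sLap H + Matrix.single v v (k : ℝ)) Bm Cm 1 =
      Matrix.fromBlocks (x • 1 - (sLap H + Matrix.single v v (k : ℝ))) (-Bm) (-Cm)
        ((x - 1) • 1) := by
    ext y z
    cases y <;> cases z <;>
      simp [Matrix.sub_apply, Matrix.smul_apply, Matrix.one_apply] <;> split <;> simp <;> ring
  rw [hsplit]
  letI : Invertible ((x - 1) • (1 : Matrix (Fin k) (Fin k) ℝ)) :=
    ⟨(x - 1)⁻¹ • 1, by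
      rw [Matrix.smul_mul, Matrix.mul_smul, Matrix.one_mul, smul_smul,
        inv_mul_cancel₀ hsub, one_smul], by
      rw [Matrix.smul_mul, Matrix.mul_smul, Matrix.one_mul, smul_smul,
        mul_inv_cancel₀ hsub, one_smul]⟩
  rw [Matrix.det_fromBlocks₂₂]
  have hinv : ⅟((x - 1) • (1 : Matrix (Fin k) (Fin k) ℝ)) = (x - 1)⁻¹ • 1 := rfl
  have hBC : Bm * Cm = Matrix.single v v (k : ℝ) := by
    ext a b
    simp only [Matrix.mul_apply, hBm, hCm, Matrix.of_apply, Matrix.single,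
      ite_mul, one_mul, zero_mul]
    by_cases ha : a = v
    · by_cases hb : b = v
      · simp [ha, hb]
      · have hnv : v ≠ b := fun h => hb h.symm
        simp [ha, hb, hnv]
    · have hnv : v ≠ a := fun h => ha h.symm
      simp [ha, hnv]
  have hprod : (-Bm) * ⅟((x - 1) • (1 : Matrix (Fin k) (Fin k) ℝ)) * (-Cm) =
      (x - 1)⁻¹ • Matrix.single v v (k : ℝ) := by
    rw [hinv, Matrix.mul_smul, Matrix.mul_one, Matrix.smul_mul, Matrix.neg_mul,
      Matrix.mul_neg, neg_neg, hBC]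
  rw [hprod]
  have hA : x • (1 : Matrix V V ℝ) - (sLap H + Matrix.single v v (k:ℝ)) -
      (x - 1)⁻¹ • Matrix.single v v (k:ℝ) =
      (x • 1 - sLap H) + Matrix.single v v (-((k:ℝ) + k * (x - 1)⁻¹)) := by
    ext a b
    simp only [Matrix.sub_apply, Matrix.add_apply, Matrix.smul_apply, Matrix.single,
      Matrix.of_apply, smul_eq_mul, mul_ite, mul_zero, mul_one]
    split <;> ring
  rw [hA, det_add_stdBasis, Matrix.det_smul, Matrix.det_one, Fintype.card_fin, mul_one]
  have hdelsub : (x • (1 : Matrix V V ℝ) - sLap H).submatrix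
      (fun y : {y : V // y ≠ v} => (y : V)) (fun y : {y : V // y ≠ v} => (y : V)) =
      x • 1 - (sLap H).submatrix (fun y : {y : V // y ≠ v} => (y : V))
        (fun y : {y : V // y ≠ v} => (y : V)) := by
    ext i j
    simp only [Matrix.submatrix_apply, Matrix.sub_apply, Matrix.smul_apply, Matrix.one_apply,
      Subtype.val_inj]
  rw [hdelsub]
  -- now both dets are evals of charpolys
  rw [← eval_charpoly', ← eval_charpoly', ← QPoly, ← QPolyDel]
  -- RHS
  simp only [eval_sub, eval_mul, eval_pow, eval_X, eval_one, eval_natCast]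
  cases k with
  | zero => simp
  | succ m =>
    have hpow : (x - 1) ^ (m + 1) = (x - 1) ^ m * (x - 1) := pow_succ _ _
    simp only [Nat.add_sub_cancel, hpow]
    field_simp
    ring
end
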